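/- Let X be a proper geodesic δ-hyperbolic space, let b ∈ 𝔅̂(X) with basepoint ω_b, suppose X is K-roughly starlike from ω_b, and let ε > 0 be such that ρ_{ε,b} is a GH-density on X with constant M. Let Y be the quasihyperbolization of the incomplete uniform metric space X_{ε,b}. Then the identity map X → Y is H-biLipschitz with H depending only on δ, K, ε and M. -/

import Mathlib

open Metric Set Filter Topology
open scoped ENNReal Classical

noncomputable section

namespace Paper

variable {X Y : Type*}

/-- The distance function of a metric space. -/
def distFun (X : Type*) [MetricSpace X] : X → X → ℝ := fun p q => dist p q

/-- `e` is a genuine metric distance function. -/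
def IsMetricDist (e : X → X → ℝ) : Prop :=
  (∀ x, e x x = 0) ∧ (∀ x y, x ≠ y → 0 < e x y) ∧ (∀ x y, e x y = e y x) ∧
    ∀ x y z, e x z ≤ e x y + e y z

/-- Cauchy sequence with respect to the distance function `e`. -/
def CauchyWrt (e : X → X → ℝ) (u : ℕ → X) : Prop :=
  ∀ δ : ℝ, 0 < δ → ∃ N : ℕ, ∀ m, N ≤ m → ∀ n, N ≤ n → e (u m) (u n) < δ

/-- The sequence converges, w.r.t. `e`, to a point of the space. -/
def ConvWrt (e : X → X → ℝ) (u : ℕ → X) : Prop :=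
  ∃ y : X, Tendsto (fun n => e (u n) y) atTop (𝓝 0)

/-- The space is incomplete with respect to `e`:
some Cauchy sequence does not converge in the space. -/
def IncompleteWrt (e : X → X → ℝ) : Prop :=
  ∃ u : ℕ → X, CauchyWrt e u ∧ ¬ ConvWrt e u

/-- Distance from `x` to the metric boundary (the completion minus the space),
measured w.r.t. `e`: the infimum of the limits `lim_n e x (u n)` over all Cauchy
sequences `u` that have no limit in the space. -/
def bdryDistWrt (e : X → X → ℝ) (x : X) : ℝ :=
  sInf { r : ℝ | ∃ u : ℕ → X, CauchyWrt e u ∧ ¬ ConvWrt e u ∧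
    Tendsto (fun n => e x (u n)) atTop (𝓝 r) }

/-- Sequential compactness of a set w.r.t. `e`. -/
def SeqCompactWrt (e : X → X → ℝ) (s : Set X) : Prop :=
  ∀ u : ℕ → X, (∀ n, u n ∈ s) → ∃ y ∈ s, ∃ φ : ℕ → ℕ, StrictMono φ ∧
    Tendsto (fun n => e (u (φ n)) y) atTop (𝓝 0)

/-- Local compactness w.r.t. `e`: every point has arbitrarily small compact closed balls. -/
def LocallyCompactWrt (e : X → X → ℝ) : Prop :=
  ∀ x : X, ∀ r : ℝ, 0 < r → ∃ r' : ℝ, 0 < r' ∧ r' ≤ r ∧ SeqCompactWrt e { y | e x y ≤ r' }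

/-- Continuity of a curve on a set of parameters, w.r.t. `e`. -/
def ContinuousOnWrt (e : X → X → ℝ) (γ : ℝ → X) (I : Set ℝ) : Prop :=
  ∀ t ∈ I, ∀ δ : ℝ, 0 < δ → ∃ η : ℝ, 0 < η ∧ ∀ s ∈ I, |s - t| < η → e (γ s) (γ t) < δ

/-- The length (total variation) of the curve `γ` on the parameter set `I`, w.r.t. `e`. -/
def varOn (e : X → X → ℝ) (γ : ℝ → X) (I : Set ℝ) : ℝ≥0∞ :=
  ⨆ p : ℕ × { u : ℕ → ℝ // Monotone u ∧ ∀ i, u i ∈ I },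
    ∑ i ∈ Finset.range p.1, ENNReal.ofReal (e (γ (p.2.1 (i + 1))) (γ (p.2.1 i)))

/-- `X` with distance `e` is an `A`-uniform metric space: it is a locally compact,
incomplete metric space any two of whose points are joined by an `A`-uniform curve. -/
def IsUniformSpcWrt (e : X → X → ℝ) (A : ℝ) : Prop :=
  IsMetricDist e ∧ LocallyCompactWrt e ∧ IncompleteWrt e ∧
  ∀ x y : X, ∃ (a b : ℝ) (γ : ℝ → X), a ≤ b ∧ ContinuousOnWrt e γ (Icc a b) ∧
    γ a = x ∧ γ b = y ∧
    varOn e γ (Icc a b) ≤ ENNReal.ofReal (A * e x y) ∧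
    ∀ t ∈ Icc a b, min (varOn e γ (Icc a t)) (varOn e γ (Icc t b)) ≤
      ENNReal.ofReal (A * bdryDistWrt e (γ t))

/-- `f` is `∂`-Lipschitz with data `(L, lam)`. -/
def PartialLipschitzWrt (e : X → X → ℝ) (e' : Y → Y → ℝ) (L lam : ℝ) (f : X → Y) : Prop :=
  ∀ x y z : X, e y x < lam * bdryDistWrt e x → e z x < lam * bdryDistWrt e x →
    e' (f y) (f z) / bdryDistWrt e' (f x) ≤ L * (e y z / bdryDistWrt e x)

/-- `f` (with inverse `g`) is `∂`-biLipschitz with data `(L, lam)`. -/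
def PartialBiLipschitzWrt (e : X → X → ℝ) (e' : Y → Y → ℝ) (L lam : ℝ)
    (f : X → Y) (g : Y → X) : Prop :=
  1 ≤ L ∧ Function.LeftInverse g f ∧ Function.RightInverse g f ∧
    PartialLipschitzWrt e e' L lam f ∧ PartialLipschitzWrt e' e L lam g

/-- Cross-ratio of a quadruple of points, w.r.t. `e`. -/
def crossRatioWrt (e : X → X → ℝ) (x y z w : X) : ℝ := e x z * e y w / (e x y * e z w)

/-- `f` is `η`-quasimöbius. -/
def QuasiMobiusWrt (e : X → X → ℝ) (e' : Y → Y → ℝ) (η : ℝ → ℝ) (f : X → Y) : Prop :=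
  ∀ x y z w : X, x ≠ y → x ≠ z → x ≠ w → y ≠ z → y ≠ w → z ≠ w →
    crossRatioWrt e' (f x) (f y) (f z) (f w) ≤ η (crossRatioWrt e x y z w)

/-- `f` is `η`-quasisymmetric. -/
def QuasiSymmetricWrt (e : X → X → ℝ) (e' : Y → Y → ℝ) (η : ℝ → ℝ) (f : X → Y) : Prop :=
  ∀ x y z : X, ∀ t : ℝ, 0 ≤ t → e x y ≤ t * e x z → e' (f x) (f y) ≤ η t * e' (f x) (f z)

/-- `η` is (the restriction to `[0,∞)` of) a self-homeomorphism of `[0,∞)`: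
continuous, strictly increasing, fixing `0`, and tending to `∞`. -/
def IsControlFun (η : ℝ → ℝ) : Prop :=
  ContinuousOn η (Ici 0) ∧ StrictMonoOn η (Ici 0) ∧ η 0 = 0 ∧ Tendsto η atTop atTop

/-- The conformal deformation distance with conformal factor `ρ`: the infimum of
`∫ ρ ∘ γ` over all `1`-Lipschitz (w.r.t. `e`) curves joining `x` to `y`
(equivalently, the infimum of `∫_γ ρ ds` over all rectifiable curves joining `x` to `y`). -/
def confDistWrt (e : X → X → ℝ) (ρ : X → ℝ) (x y : X) : ℝ :=
  sInf { l : ℝ | ∃ (T : ℝ) (γ : ℝ → X), 0 ≤ T ∧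
    (∀ s ∈ Icc 0 T, ∀ t ∈ Icc 0 T, e (γ s) (γ t) ≤ |s - t|) ∧
    γ 0 = x ∧ γ T = y ∧ l = ∫ t in (0:ℝ)..T, ρ (γ t) }

/-- The quasihyperbolic metric of the space with distance `e`. -/
def quasiHypWrt (e : X → X → ℝ) : X → X → ℝ :=
  confDistWrt e fun z => (bdryDistWrt e z)⁻¹

/-- `γ` is a geodesic segment from `x` to `y`, parametrized by arclength on `[0, e x y]`. -/
def IsGeodesicSegWrt (e : X → X → ℝ) (γ : ℝ → X) (x y : X) : Prop :=
  γ 0 = x ∧ γ (e x y) = y ∧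
    ∀ s ∈ Icc 0 (e x y), ∀ t ∈ Icc 0 (e x y), e (γ s) (γ t) = |s - t|

/-- Any two points are joined by a geodesic. -/
def GeodesicSpaceWrt (e : X → X → ℝ) : Prop := ∀ x y : X, ∃ γ : ℝ → X, IsGeodesicSegWrt e γ x y

/-- The image of a geodesic segment. -/
def segImageWrt (e : X → X → ℝ) (γ : ℝ → X) (x y : X) : Set X := γ '' Icc 0 (e x y)

/-- `δ`-hyperbolicity: every geodesic triangle is `δ`-thin. -/
def DeltaHyperbolicWrt (e : X → X → ℝ) (δ : ℝ) : Prop :=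
  ∀ (x y z : X) (γ₁ γ₂ γ₃ : ℝ → X),
    IsGeodesicSegWrt e γ₁ x y → IsGeodesicSegWrt e γ₂ y z → IsGeodesicSegWrt e γ₃ z x →
    (∀ p ∈ segImageWrt e γ₁ x y, ∃ q ∈ segImageWrt e γ₂ y z ∪ segImageWrt e γ₃ z x, e p q ≤ δ) ∧
    (∀ p ∈ segImageWrt e γ₂ y z, ∃ q ∈ segImageWrt e γ₁ x y ∪ segImageWrt e γ₃ z x, e p q ≤ δ) ∧
    (∀ p ∈ segImageWrt e γ₃ z x, ∃ q ∈ segImageWrt e γ₁ x y ∪ segImageWrt e γ₂ y z, e p q ≤ δ)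

/-- `γ` is a geodesic ray (defined on `[0,∞)`). -/
def IsGeodesicRayWrt (e : X → X → ℝ) (γ : ℝ → X) : Prop :=
  ∀ s ∈ Ici (0:ℝ), ∀ t ∈ Ici (0:ℝ), e (γ s) (γ t) = |s - t|

/-- `γ` is a geodesic line. -/
def IsGeodesicLineWrt (e : X → X → ℝ) (γ : ℝ → X) : Prop :=
  ∀ s t : ℝ, e (γ s) (γ t) = |s - t|

/-- Two rays are at bounded distance from each other (represent the same
point of the Gromov boundary). -/
def RayEquivWrt (e : X → X → ℝ) (γ σ : ℝ → X) : Prop :=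
  ∃ c : ℝ, ∀ t ∈ Ici (0:ℝ), e (γ t) (σ t) ≤ c

/-- The infimal distance from `x` to the set `s`, w.r.t. `e`. -/
def infDistWrt (e : X → X → ℝ) (x : X) (s : Set X) : ℝ := sInf (e x '' s)

/-- `X` is `K`-roughly starlike from the point `z`. -/
def RoughStarlikeFromPointWrt (e : X → X → ℝ) (K : ℝ) (z : X) : Prop :=
  ∀ x : X, ∃ γ : ℝ → X, IsGeodesicRayWrt e γ ∧ γ 0 = z ∧ infDistWrt e x (γ '' Ici 0) ≤ K

/-- `X` is `K`-roughly starlike from the Gromov boundary point represented by the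
geodesic ray `ρ`: every point lies within distance `K` of a geodesic line starting
from that boundary point. -/
def RoughStarlikeFromRayWrt (e : X → X → ℝ) (K : ℝ) (ρ : ℝ → X) : Prop :=
  ∀ x : X, ∃ γ : ℝ → X, IsGeodesicLineWrt e γ ∧ RayEquivWrt e (fun t => γ (-t)) ρ ∧
    infDistWrt e x (range γ) ≤ K

/-- The Busemann function of the geodesic ray `ρ`:
`b_ρ(x) = lim_{t→∞} (e (ρ t) x - t) = inf_{t ≥ 0} (e (ρ t) x - t)`. -/
def busemannWrt (e : X → X → ℝ) (ρ : ℝ → X) (x : X) : ℝ :=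
  sInf ((fun t => e (ρ t) x - t) '' Ici 0)

/-- `b ∈ 𝔅̂(X)` (either a translated distance function or a translated Busemann
function), and `X` is `K`-roughly starlike from the basepoint of `b`. -/
def BhatStarlike (e : X → X → ℝ) (K : ℝ) (b : X → ℝ) : Prop :=
  (∃ (z : X) (s : ℝ), (∀ x, b x = e x z + s) ∧ RoughStarlikeFromPointWrt e K z) ∨
  (∃ (ρ : ℝ → X) (s : ℝ), IsGeodesicRayWrt e ρ ∧ (∀ x, b x = busemannWrt e ρ x + s) ∧
    RoughStarlikeFromRayWrt e K ρ)

/-- `ρ` is a Gehring–Hayman density with constant `M`: the `ρ`-length of any geodesic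
is at most `M` times the conformal distance between its endpoints. -/
def IsGHDensityWrt (e : X → X → ℝ) (M : ℝ) (ρ : X → ℝ) : Prop :=
  ∀ (x y : X) (γ : ℝ → X), IsGeodesicSegWrt e γ x y →
    (∫ t in (0:ℝ)..(e x y), ρ (γ t)) ≤ M * confDistWrt e ρ x y

/-- The density `ρ_{ε,b}(x) = e^{-ε b(x)}`. -/
def uniformizationDensity (b : X → ℝ) (ε : ℝ) : X → ℝ := fun x => Real.exp (-ε * b x)

/-- The Gromov product of `x` and `y` based at `z`. -/
def gromovProdWrt (e : X → X → ℝ) (z x y : X) : ℝ := (e x z + e y z - e x y) / 2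

/-- The sequence `u` represents the Gromov boundary point of the geodesic ray `ρ`
(with respect to the basepoint `z`). -/
def SeqRepWrt (e : X → X → ℝ) (z : X) (ρ : ℝ → X) (u : ℕ → X) : Prop :=
  Tendsto (fun n => gromovProdWrt e z (u n) (ρ n)) atTop atTop

/-- The Gromov product, based at `z`, of the two boundary points represented by the
geodesic rays `ρ` and `σ` (valued in `[0,∞]`). -/
def bGromovProdWrt (e : X → X → ℝ) (z : X) (ρ σ : ℝ → X) : ℝ≥0∞ :=
  ⨅ (u : { u : ℕ → X // SeqRepWrt e z ρ u }) (v : { v : ℕ → X // SeqRepWrt e z σ v }),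
    Filter.liminf (fun n => ENNReal.ofReal (gromovProdWrt e z (u.1 n) (v.1 n))) atTop

/-- `S(x) = sup_{ω ∈ ∂X} inf_{ξ ∈ ∂X} (ω|ξ)_x`. -/
def Sfun (e : X → X → ℝ) (x : X) : ℝ≥0∞ :=
  ⨆ (ω : { ρ : ℝ → X // IsGeodesicRayWrt e ρ }),
    ⨅ (ξ : { ρ : ℝ → X // IsGeodesicRayWrt e ρ }), bGromovProdWrt e x ω.1 ξ.1

/-- The filter at the left end of the interval `I`. -/
def leftEndFilter (I : Set ℝ) : Filter ℝ :=
  if BddBelow I then 𝓝[I] (sInf I) else atBot ⊓ 𝓟 I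

/-- The filter at the right end of the interval `I`. -/
def rightEndFilter (I : Set ℝ) : Filter ℝ :=
  if BddAbove I then 𝓝[I] (sSup I) else atTop ⊓ 𝓟 I

/-- `γ : I → Ω` is an `A`-uniform curve: it is rectifiable with endpoints
`γ₋, γ₊` in the completion `Ω̄` satisfying `ℓ(γ) ≤ A d(γ₋,γ₊)` (or non-rectifiable with
`d(γ(s),γ(t)) → ∞` towards the endpoints of `I`), and at every time `t` the shorter of
the two subcurves has length at most `A d_Ω(γ(t))`. -/
def IsUniformCurve {Ω : Type*} [MetricSpace Ω] (A : ℝ) (γ : ℝ → Ω) (I : Set ℝ) : Prop :=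
  I.Nonempty ∧ I.OrdConnected ∧ ContinuousOn γ I ∧
  ((varOn (distFun Ω) γ I ≠ ⊤ ∧
     ∃ gm gp : UniformSpace.Completion Ω,
       Tendsto (fun t => (γ t : UniformSpace.Completion Ω)) (leftEndFilter I) (𝓝 gm) ∧
       Tendsto (fun t => (γ t : UniformSpace.Completion Ω)) (rightEndFilter I) (𝓝 gp) ∧
       varOn (distFun Ω) γ I ≤ ENNReal.ofReal (A * dist gm gp)) ∨
   (varOn (distFun Ω) γ I = ⊤ ∧
     Tendsto (fun pq : ℝ × ℝ => dist (γ pq.1) (γ pq.2))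
       (leftEndFilter I ×ˢ rightEndFilter I) atTop)) ∧
  ∀ t ∈ I, min (varOn (distFun Ω) γ (I ∩ Iic t)) (varOn (distFun Ω) γ (I ∩ Ici t)) ≤
    ENNReal.ofReal (A * bdryDistWrt (distFun Ω) (γ t))

/-! ### Auxiliary development for Statement 16 -/

set_option linter.unusedSectionVars false

section S16Aux

variable {X : Type*} [MetricSpace X]

@[simp] lemma distFun_apply (p q : X) : distFun X p q = dist p q := rfl

lemma uD_apply (b : X → ℝ) (ε : ℝ) (x : X) :
    uniformizationDensity b ε x = Real.exp (-ε * b x) := rfl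

lemma uD_pos (b : X → ℝ) (ε : ℝ) (x : X) : 0 < uniformizationDensity b ε x :=
  Real.exp_pos _

lemma uD_nonneg (b : X → ℝ) (ε : ℝ) (x : X) : 0 ≤ uniformizationDensity b ε x :=
  (uD_pos b ε x).le

lemma uD_le_of_dist {b : X → ℝ} {ε : ℝ} (hlip : ∀ p q : X, |b p - b q| ≤ dist p q)
    (hε : 0 < ε) (p q : X) {r : ℝ} (hr : dist p q ≤ r) :
    uniformizationDensity b ε q ≤ uniformizationDensity b ε p * Real.exp (ε * r) := by
  rw [uD_apply, uD_apply, ← Real.exp_add]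
  apply Real.exp_le_exp.2
  have h := (abs_le.1 (hlip p q)).2
  nlinarith [mul_le_mul_of_nonneg_left (show b p - r ≤ b q by linarith) hε.le]

lemma uD_ge_of_dist {b : X → ℝ} {ε : ℝ} (hlip : ∀ p q : X, |b p - b q| ≤ dist p q)
    (hε : 0 < ε) (p q : X) {r : ℝ} (hr : dist p q ≤ r) :
    uniformizationDensity b ε p * Real.exp (-(ε * r)) ≤ uniformizationDensity b ε q := by
  rw [uD_apply, uD_apply, ← Real.exp_add]
  apply Real.exp_le_exp.2
  have h := (abs_le.1 (hlip p q)).1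
  nlinarith [mul_le_mul_of_nonneg_left (show b q - r ≤ b p by linarith) hε.le]

/-! #### Busemann functions -/

lemma ray_dist {γ : ℝ → X} (hγ : IsGeodesicRayWrt (distFun X) γ) {s t : ℝ}
    (hs : 0 ≤ s) (ht : 0 ≤ t) : dist (γ s) (γ t) = |s - t| := hγ s hs t ht

lemma busemann_bddBelow {ρ₀ : ℝ → X} (hρ₀ : IsGeodesicRayWrt (distFun X) ρ₀) (x : X) :
    BddBelow ((fun t => distFun X (ρ₀ t) x - t) '' Ici 0) := by
  refine ⟨-(dist (ρ₀ 0) x), ?_⟩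
  rintro r ⟨t, ht, rfl⟩
  have h1 : dist (ρ₀ 0) (ρ₀ t) = t := by
    rw [ray_dist hρ₀ le_rfl ht, abs_of_nonpos (by linarith [mem_Ici.1 ht])]; ring
  have h2 := dist_triangle (ρ₀ 0) x (ρ₀ t)
  have h3 := dist_comm x (ρ₀ t)
  simp only [distFun_apply]
  rw [h3] at h2
  linarith [h1 ▸ h2]

lemma busemann_mem_nonempty (ρ₀ : ℝ → X) (x : X) :
    ((fun t => distFun X (ρ₀ t) x - t) '' Ici 0).Nonempty :=
  ⟨_, ⟨0, mem_Ici.2 le_rfl, rfl⟩⟩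

lemma busemann_le {ρ₀ : ℝ → X} (hρ₀ : IsGeodesicRayWrt (distFun X) ρ₀) (x : X) {t : ℝ}
    (ht : 0 ≤ t) : busemannWrt (distFun X) ρ₀ x ≤ dist (ρ₀ t) x - t :=
  csInf_le (busemann_bddBelow hρ₀ x) ⟨t, ht, rfl⟩

lemma busemann_diff_le {ρ₀ : ℝ → X} (hρ₀ : IsGeodesicRayWrt (distFun X) ρ₀) (x y : X) :
    busemannWrt (distFun X) ρ₀ x - busemannWrt (distFun X) ρ₀ y ≤ dist x y := by
  have h : busemannWrt (distFun X) ρ₀ x - dist x y ≤ busemannWrt (distFun X) ρ₀ y := by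
    apply le_csInf (busemann_mem_nonempty ρ₀ y)
    rintro r ⟨t, ht, rfl⟩
    have h1 := busemann_le hρ₀ x (mem_Ici.1 ht)
    have h2 := dist_triangle (ρ₀ t) y x
    have h3 := dist_comm x y
    simp only [distFun_apply]
    have h4 := dist_triangle (ρ₀ t) x y
    linarith [dist_comm (ρ₀ t) x]
  linarith

lemma bhat_lip {K : ℝ} {b : X → ℝ} (hb : BhatStarlike (distFun X) K b) :
    ∀ p q : X, |b p - b q| ≤ dist p q := by
  intro p q
  rcases hb with ⟨z, s, hbx, -⟩ | ⟨ρ₀, s, hray, hbx, -⟩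
  · rw [hbx p, hbx q]
    simp only [distFun_apply]
    have := abs_dist_sub_le p q z
    simpa using this
  · rw [hbx p, hbx q, abs_le]
    have h1 := busemann_diff_le hray q p
    have h2 := busemann_diff_le hray p q
    rw [dist_comm q p] at h1
    constructor <;> linarith

end S16Aux
section S16B

variable {X : Type*} [MetricSpace X]

/-- The defining set of `confDistWrt`. -/
def confSet (e : X → X → ℝ) (ρf : X → ℝ) (x y : X) : Set ℝ :=
  { l : ℝ | ∃ (T : ℝ) (γ : ℝ → X), 0 ≤ T ∧
    (∀ s ∈ Icc 0 T, ∀ t ∈ Icc 0 T, e (γ s) (γ t) ≤ |s - t|) ∧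
    γ 0 = x ∧ γ T = y ∧ l = ∫ t in (0:ℝ)..T, ρf (γ t) }

lemma confDistWrt_eq (e : X → X → ℝ) (ρf : X → ℝ) (x y : X) :
    confDistWrt e ρf x y = sInf (confSet e ρf x y) := rfl

lemma confSet_nonneg {e : X → X → ℝ} {ρf : X → ℝ} (hρ : ∀ z, 0 ≤ ρf z) {x y : X} :
    ∀ l ∈ confSet e ρf x y, 0 ≤ l := by
  rintro l ⟨T, γ, hT, -, -, -, rfl⟩
  exact intervalIntegral.integral_nonneg hT (fun u _ => hρ _)

lemma confSet_bddBelow {e : X → X → ℝ} {ρf : X → ℝ} (hρ : ∀ z, 0 ≤ ρf z) {x y : X} :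
    BddBelow (confSet e ρf x y) :=
  ⟨0, fun l hl => confSet_nonneg hρ l hl⟩

lemma confDist_nonneg {e : X → X → ℝ} {ρf : X → ℝ} (hρ : ∀ z, 0 ≤ ρf z) (x y : X) :
    0 ≤ confDistWrt e ρf x y :=
  Real.sInf_nonneg (confSet_nonneg hρ)

lemma confDist_le_of_mem {e : X → X → ℝ} {ρf : X → ℝ} (hρ : ∀ z, 0 ≤ ρf z) {x y : X}
    {l : ℝ} (hl : l ∈ confSet e ρf x y) : confDistWrt e ρf x y ≤ l :=
  csInf_le (confSet_bddBelow hρ) hl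

lemma le_confDist {e : X → X → ℝ} {ρf : X → ℝ} {x y : X} {c : ℝ}
    (hne : (confSet e ρf x y).Nonempty) (hc : ∀ l ∈ confSet e ρf x y, c ≤ l) :
    c ≤ confDistWrt e ρf x y :=
  le_csInf hne hc

/-- 1-Lipschitz curves (wrt `dist`) are continuous on the parameter interval. -/
lemma adm_continuousOn {T : ℝ} {γ : ℝ → X}
    (hadm : ∀ s ∈ Icc (0:ℝ) T, ∀ t ∈ Icc (0:ℝ) T, dist (γ s) (γ t) ≤ |s - t|) :
    ContinuousOn γ (Icc 0 T) := by
  have : LipschitzOnWith 1 γ (Icc 0 T) := by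
    apply LipschitzOnWith.of_dist_le_mul
    intro s hs t ht
    simpa [Real.dist_eq] using hadm s hs t ht
  exact this.continuousOn

lemma uD_continuous {b : X → ℝ} {ε : ℝ} (hlip : ∀ p q : X, |b p - b q| ≤ dist p q) :
    Continuous (uniformizationDensity b ε) := by
  have hb : LipschitzWith 1 b := by
    apply LipschitzWith.of_dist_le_mul
    intro p q
    simpa [Real.dist_eq] using hlip p q
  exact Real.continuous_exp.comp (continuous_const.mul hb.continuous)

lemma adm_uD_continuousOn {b : X → ℝ} {ε : ℝ} (hlip : ∀ p q : X, |b p - b q| ≤ dist p q)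
    {T : ℝ} {γ : ℝ → X}
    (hadm : ∀ s ∈ Icc (0:ℝ) T, ∀ t ∈ Icc (0:ℝ) T, dist (γ s) (γ t) ≤ |s - t|) :
    ContinuousOn (fun t => uniformizationDensity b ε (γ t)) (Icc 0 T) :=
  (uD_continuous hlip).comp_continuousOn (adm_continuousOn hadm)

lemma adm_uD_intervalIntegrable {b : X → ℝ} {ε : ℝ}
    (hlip : ∀ p q : X, |b p - b q| ≤ dist p q) {T : ℝ} (hT : 0 ≤ T) {γ : ℝ → X}
    (hadm : ∀ s ∈ Icc (0:ℝ) T, ∀ t ∈ Icc (0:ℝ) T, dist (γ s) (γ t) ≤ |s - t|) :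
    IntervalIntegrable (fun t => uniformizationDensity b ε (γ t))
      MeasureTheory.volume 0 T := by
  apply ContinuousOn.intervalIntegrable
  rw [uIcc_of_le hT]
  exact adm_uD_continuousOn hlip hadm

lemma integ_exp_neg {ε : ℝ} (hε : 0 < ε) (L : ℝ) :
    ∫ t in (0:ℝ)..L, Real.exp (-(ε * t)) = (1 - Real.exp (-(ε * L))) / ε := by
  have h : ∀ t ∈ uIcc (0:ℝ) L,
      HasDerivAt (fun u => -Real.exp (-(ε * u)) / ε) (Real.exp (-(ε * t))) t := by
    intro t _
    have h1 : HasDerivAt (fun u : ℝ => -(ε * u)) (-ε) t := by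
      simpa using ((hasDerivAt_id t).const_mul (-ε))
    have h2 := h1.exp
    have h3 := (h2.neg).div_const ε
    rw [show Real.exp (-(ε * t)) = -(Real.exp (-(ε * t)) * -ε) / ε by
      rw [eq_div_iff hε.ne']; ring]
    exact h3
  rw [intervalIntegral.integral_eq_sub_of_hasDerivAt h]
  · simp only [mul_zero, neg_zero, Real.exp_zero]
    ring
  · apply ContinuousOn.intervalIntegrable
    exact (Real.continuous_exp.comp (continuous_const.mul continuous_id).neg).continuousOn

/-- exp(-(εL)) form with flipped argument. -/
lemma integ_exp_neg_flip {ε : ℝ} (hε : 0 < ε) (L : ℝ) :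
    ∫ t in (0:ℝ)..L, Real.exp (-(ε * (L - t))) = (1 - Real.exp (-(ε * L))) / ε := by
  have := intervalIntegral.integral_comp_sub_left (a := (0:ℝ)) (b := L)
    (fun u => Real.exp (-(ε * u))) L
  simp only [sub_zero, sub_self] at this
  rw [this]
  exact integ_exp_neg hε L

end S16B
section S16C

variable {X : Type*} [MetricSpace X] {b : X → ℝ} {ε K : ℝ}

/-- Geodesics give elements of the conformal-distance defining set. -/
lemma geod_adm {γ : ℝ → X} {p q : X} (hγ : IsGeodesicSegWrt (distFun X) γ p q) :
    ∀ s ∈ Icc (0:ℝ) (dist p q), ∀ t ∈ Icc (0:ℝ) (dist p q),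
      distFun X (γ s) (γ t) ≤ |s - t| := by
  intro s hs t ht
  have h := hγ.2.2 s (by simpa using hs) t (by simpa using ht)
  simp only [distFun_apply] at h ⊢
  exact le_of_eq h

lemma geod_mem (hlip : ∀ p q : X, |b p - b q| ≤ dist p q) {γ : ℝ → X} {p q : X}
    (hγ : IsGeodesicSegWrt (distFun X) γ p q) :
    (∫ t in (0:ℝ)..(dist p q), uniformizationDensity b ε (γ t)) ∈
      confSet (distFun X) (uniformizationDensity b ε) p q := by
  refine ⟨dist p q, γ, dist_nonneg, geod_adm hγ, hγ.1, by simpa using hγ.2.1, rfl⟩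

lemma confSet_nonempty (hlip : ∀ p q : X, |b p - b q| ≤ dist p q)
    (hGeo : GeodesicSpaceWrt (distFun X)) (p q : X) :
    (confSet (distFun X) (uniformizationDensity b ε) p q).Nonempty := by
  obtain ⟨γ, hγ⟩ := hGeo p q
  exact ⟨_, geod_mem hlip hγ⟩

lemma dist_points_on_geod {γ : ℝ → X} {p q : X} (hγ : IsGeodesicSegWrt (distFun X) γ p q)
    {t : ℝ} (ht : t ∈ Icc (0:ℝ) (dist p q)) : dist p (γ t) = t := by
  have h := hγ.2.2 0 (by simp [dist_nonneg]) t (by simpa using ht)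
  simp only [distFun_apply, hγ.1] at h
  rw [h, zero_sub, abs_neg, abs_of_nonneg ht.1]

lemma eC_le_geod (hlip : ∀ p q : X, |b p - b q| ≤ dist p q) (hε : 0 < ε)
    (hGeo : GeodesicSpaceWrt (distFun X)) (p q : X) :
    confDistWrt (distFun X) (uniformizationDensity b ε) p q ≤
      dist p q * (uniformizationDensity b ε p * Real.exp (ε * dist p q)) := by
  obtain ⟨γ, hγ⟩ := hGeo p q
  set D := dist p q with hD
  have hD0 : 0 ≤ D := dist_nonneg
  refine le_trans (confDist_le_of_mem (fun z => uD_nonneg b ε z) (geod_mem hlip hγ)) ?_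
  have hadm : ∀ s ∈ Icc (0:ℝ) D, ∀ t ∈ Icc (0:ℝ) D, dist (γ s) (γ t) ≤ |s - t| := by
    intro s hs t ht; exact geod_adm hγ s hs t ht
  calc (∫ t in (0:ℝ)..D, uniformizationDensity b ε (γ t))
      ≤ ∫ _t in (0:ℝ)..D, (uniformizationDensity b ε p * Real.exp (ε * D)) := by
        apply intervalIntegral.integral_mono_on hD0
          (adm_uD_intervalIntegrable hlip hD0 hadm) intervalIntegrable_const
        intro t ht
        apply uD_le_of_dist hlip hε
        rw [dist_points_on_geod hγ ht]
        exact ht.2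
    _ = D * (uniformizationDensity b ε p * Real.exp (ε * D)) := by
        rw [intervalIntegral.integral_const, smul_eq_mul, sub_zero]

lemma eC_ge_elem (hlip : ∀ p q : X, |b p - b q| ≤ dist p q) (hε : 0 < ε) {p q : X} :
    ∀ l ∈ confSet (distFun X) (uniformizationDensity b ε) p q,
      (uniformizationDensity b ε p / ε) * (1 - Real.exp (-(ε * dist p q))) ≤ l ∧
      (uniformizationDensity b ε q / ε) * (1 - Real.exp (-(ε * dist p q))) ≤ l := by
  rintro l ⟨T, γ, hT, hadm', h0, h1, rfl⟩
  have hadm : ∀ s ∈ Icc (0:ℝ) T, ∀ t ∈ Icc (0:ℝ) T, dist (γ s) (γ t) ≤ |s - t| := by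
    intro s hs t ht; simpa using hadm' s hs t ht
  have hTD : dist p q ≤ T := by
    have := hadm 0 ⟨le_rfl, hT⟩ T ⟨hT, le_rfl⟩
    rw [h0, h1] at this
    rwa [abs_of_nonpos (by linarith), zero_sub, neg_neg] at this
  have hmono : Real.exp (-(ε * T)) ≤ Real.exp (-(ε * dist p q)) := by
    apply Real.exp_le_exp.2
    nlinarith
  have hint : IntervalIntegrable (fun t => uniformizationDensity b ε (γ t))
      MeasureTheory.volume 0 T := adm_uD_intervalIntegrable hlip hT hadm
  constructor
  · -- lower bound with density at p
    have key : ∀ t ∈ Icc (0:ℝ) T,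
        uniformizationDensity b ε p * Real.exp (-(ε * t)) ≤
          uniformizationDensity b ε (γ t) := by
      intro t ht
      apply uD_ge_of_dist hlip hε
      have := hadm 0 ⟨le_rfl, hT⟩ t ht
      rw [h0] at this
      calc dist p (γ t) ≤ |0 - t| := this
        _ = t := by rw [abs_of_nonpos (by linarith [ht.1])]; ring
    have hint2 : IntervalIntegrable
        (fun t => uniformizationDensity b ε p * Real.exp (-(ε * t)))
        MeasureTheory.volume 0 T := by
      apply Continuous.intervalIntegrable
      exact continuous_const.mul (Real.continuous_exp.comp (continuous_const.mul continuous_id).neg)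
    have h2 := intervalIntegral.integral_mono_on hT hint2 hint key
    rw [intervalIntegral.integral_const_mul] at h2
    rw [integ_exp_neg hε T] at h2
    have h3 : uniformizationDensity b ε p / ε * (1 - Real.exp (-(ε * dist p q))) ≤
        uniformizationDensity b ε p * ((1 - Real.exp (-(ε * T))) / ε) := by
      rw [div_mul_eq_mul_div, mul_div_assoc]
      have h5 : (1 - Real.exp (-(ε * dist p q))) ≤ (1 - Real.exp (-(ε * T))) := by linarith
      apply mul_le_mul_of_nonneg_left _ (uD_nonneg b ε p)
      gcongr 
    exact le_trans h3 h2
  · -- lower bound with density at q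
    have key : ∀ t ∈ Icc (0:ℝ) T,
        uniformizationDensity b ε q * Real.exp (-(ε * (T - t))) ≤
          uniformizationDensity b ε (γ t) := by
      intro t ht
      apply uD_ge_of_dist hlip hε
      have := hadm T ⟨hT, le_rfl⟩ t ht
      rw [h1] at this
      rw [dist_comm]
      calc dist (γ t) q ≤ T - t := by
            rw [dist_comm]
            calc dist q (γ t) ≤ |T - t| := this
              _ = T - t := abs_of_nonneg (by linarith [ht.2])
        _ ≤ T - t := le_rfl
    have hint2 : IntervalIntegrable
        (fun t => uniformizationDensity b ε q * Real.exp (-(ε * (T - t))))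
        MeasureTheory.volume 0 T := by
      apply Continuous.intervalIntegrable
      apply continuous_const.mul
      apply Real.continuous_exp.comp
      exact (continuous_const.mul (continuous_const.sub continuous_id)).neg
    have h2 := intervalIntegral.integral_mono_on hT hint2 hint key
    rw [intervalIntegral.integral_const_mul] at h2
    rw [integ_exp_neg_flip hε T] at h2
    have h3 : uniformizationDensity b ε q / ε * (1 - Real.exp (-(ε * dist p q))) ≤
        uniformizationDensity b ε q * ((1 - Real.exp (-(ε * T))) / ε) := by
      rw [div_mul_eq_mul_div, mul_div_assoc]
      have h5 : (1 - Real.exp (-(ε * dist p q))) ≤ (1 - Real.exp (-(ε * T))) := by linarith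
      apply mul_le_mul_of_nonneg_left _ (uD_nonneg b ε q)
      gcongr
    exact le_trans h3 h2

lemma eC_ge_left (hlip : ∀ p q : X, |b p - b q| ≤ dist p q) (hε : 0 < ε)
    (hGeo : GeodesicSpaceWrt (distFun X)) (p q : X) :
    (uniformizationDensity b ε p / ε) * (1 - Real.exp (-(ε * dist p q))) ≤
      confDistWrt (distFun X) (uniformizationDensity b ε) p q :=
  le_confDist (confSet_nonempty hlip hGeo p q)
    (fun l hl => ((eC_ge_elem hlip hε) l hl).1)

lemma eC_ge_right (hlip : ∀ p q : X, |b p - b q| ≤ dist p q) (hε : 0 < ε)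
    (hGeo : GeodesicSpaceWrt (distFun X)) (p q : X) :
    (uniformizationDensity b ε q / ε) * (1 - Real.exp (-(ε * dist p q))) ≤
      confDistWrt (distFun X) (uniformizationDensity b ε) p q :=
  le_confDist (confSet_nonempty hlip hGeo p q)
    (fun l hl => ((eC_ge_elem hlip hε) l hl).2)

/-- Distance control from conformal-distance control. -/
lemma dist_le_of_eC_le (hlip : ∀ p q : X, |b p - b q| ≤ dist p q) (hε : 0 < ε)
    (hGeo : GeodesicSpaceWrt (distFun X)) {p q : X} {r : ℝ} (hr : 0 ≤ r)
    (h : confDistWrt (distFun X) (uniformizationDensity b ε) p q ≤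
      (uniformizationDensity b ε p / ε) * (1 - Real.exp (-(ε * r)))) :
    dist p q ≤ r := by
  have h1 := eC_ge_left hlip hε hGeo p q
  have hpos : 0 < uniformizationDensity b ε p / ε := div_pos (uD_pos b ε p) hε
  have h2 : 1 - Real.exp (-(ε * dist p q)) ≤ 1 - Real.exp (-(ε * r)) :=
    le_of_mul_le_mul_left (le_trans h1 h) hpos
  have h3 : Real.exp (-(ε * r)) ≤ Real.exp (-(ε * dist p q)) := by linarith
  have h4 := Real.exp_le_exp.1 h3
  nlinarith

/-- Concatenation: the triangle inequality for conformal distances. -/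
lemma confDist_triangle_gen {e : X → X → ℝ} {ρf : X → ℝ} (hρ : ∀ z, 0 ≤ ρf z)
    (htri : ∀ a c d : X, e a d ≤ e a c + e c d) {x y z : X}
    (h1 : (confSet e ρf x y).Nonempty) (h2 : (confSet e ρf y z).Nonempty) :
    confDistWrt e ρf x z ≤ confDistWrt e ρf x y + confDistWrt e ρf y z := by
  have key : ∀ l₁ ∈ confSet e ρf x y, ∀ l₂ ∈ confSet e ρf y z,
      confDistWrt e ρf x z ≤ l₁ + l₂ := by
    rintro l₁ ⟨T₁, γ₁, hT₁, ha₁, h01, h11, rfl⟩ l₂ ⟨T₂, γ₂, hT₂, ha₂, h02, h12, rfl⟩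
    classical
    set σ : ℝ → X := fun t => if t ≤ T₁ then γ₁ t else γ₂ (t - T₁) with hσdef
    have hjoin : γ₁ T₁ = γ₂ 0 := by rw [h11, h02]
    have hadm : ∀ s ∈ Icc (0:ℝ) (T₁ + T₂), ∀ t ∈ Icc (0:ℝ) (T₁ + T₂),
        e (σ s) (σ t) ≤ |s - t| := by
      intro s hs t ht
      by_cases hsT : s ≤ T₁ <;> by_cases htT : t ≤ T₁
      · simp only [hσdef, if_pos hsT, if_pos htT]
        exact ha₁ s ⟨hs.1, hsT⟩ t ⟨ht.1, htT⟩
      · -- s ≤ T₁ < t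
        simp only [hσdef, if_pos hsT, if_neg htT]
        push_neg at htT
        have hA : e (γ₁ s) (γ₁ T₁) ≤ T₁ - s := by
          have := ha₁ s ⟨hs.1, hsT⟩ T₁ ⟨le_trans hs.1 hsT, le_rfl⟩
          rwa [abs_of_nonpos (by linarith), neg_sub] at this
        have hB : e (γ₁ T₁) (γ₂ (t - T₁)) ≤ t - T₁ := by
          rw [hjoin]
          have := ha₂ 0 ⟨le_rfl, hT₂⟩ (t - T₁) ⟨by linarith, by linarith [ht.2]⟩
          rwa [zero_sub, abs_neg, abs_of_nonneg (by linarith)] at this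
        calc e (γ₁ s) (γ₂ (t - T₁)) ≤ e (γ₁ s) (γ₁ T₁) + e (γ₁ T₁) (γ₂ (t - T₁)) :=
              htri _ _ _
          _ ≤ (T₁ - s) + (t - T₁) := add_le_add hA hB
          _ = t - s := by ring
          _ ≤ |s - t| := by rw [abs_sub_comm]; exact le_abs_self _
      · -- t ≤ T₁ < s
        simp only [hσdef, if_neg hsT, if_pos htT]
        push_neg at hsT
        have hA : e (γ₂ (s - T₁)) (γ₂ 0) ≤ s - T₁ := by
          have := ha₂ (s - T₁) ⟨by linarith, by linarith [hs.2]⟩ 0 ⟨le_rfl, hT₂⟩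
          rwa [sub_zero, abs_of_nonneg (by linarith)] at this
        have hB : e (γ₂ 0) (γ₁ t) ≤ T₁ - t := by
          rw [← hjoin]
          have := ha₁ T₁ ⟨le_trans ht.1 htT, le_rfl⟩ t ⟨ht.1, htT⟩
          rwa [abs_of_nonneg (by linarith)] at this
        calc e (γ₂ (s - T₁)) (γ₁ t) ≤ e (γ₂ (s - T₁)) (γ₂ 0) + e (γ₂ 0) (γ₁ t) :=
              htri _ _ _
          _ ≤ (s - T₁) + (T₁ - t) := add_le_add hA hB
          _ = s - t := by ring
          _ ≤ |s - t| := le_abs_self _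
      · simp only [hσdef, if_neg hsT, if_neg htT]
        push_neg at hsT htT
        have := ha₂ (s - T₁) ⟨by linarith, by linarith [hs.2]⟩ (t - T₁)
          ⟨by linarith, by linarith [ht.2]⟩
        calc e (γ₂ (s - T₁)) (γ₂ (t - T₁)) ≤ |s - T₁ - (t - T₁)| := this
          _ = |s - t| := by rw [show s - T₁ - (t - T₁) = s - t by ring]
    have hend : σ (T₁ + T₂) = z := by
      by_cases h : T₁ + T₂ ≤ T₁
      · have hT₂0 : T₂ = 0 := le_antisymm (by linarith) hT₂
        simp only [hσdef, if_pos h]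
        rw [show T₁ + T₂ = T₁ by linarith, h11, ← h12, hT₂0, h02]
      · simp only [hσdef, if_neg h, add_sub_cancel_left, h12]
    have hstart : σ 0 = x := by
      simp only [hσdef, if_pos hT₁, h01]
    have hmem : (∫ t in (0:ℝ)..(T₁ + T₂), ρf (σ t)) ∈ confSet e ρf x z :=
      ⟨T₁ + T₂, σ, by linarith, hadm, hstart, hend, rfl⟩
    refine le_trans (confDist_le_of_mem hρ hmem) ?_
    have e₁ : EqOn (fun t => ρf (σ t)) (fun t => ρf (γ₁ t)) (uIcc 0 T₁) := by
      intro t ht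
      rw [uIcc_of_le hT₁] at ht
      simp only [hσdef, if_pos ht.2]
    have e₂ : EqOn (fun t => ρf (σ t)) (fun t => ρf (γ₂ (t - T₁))) (uIcc T₁ (T₁ + T₂)) := by
      intro t ht
      rw [uIcc_of_le (by linarith : T₁ ≤ T₁ + T₂)] at ht
      by_cases h : t ≤ T₁
      · have htt : t = T₁ := le_antisymm h ht.1
        subst htt
        have hσT : σ t = γ₂ 0 := by
          simp only [hσdef]
          rw [if_pos le_rfl, hjoin]
        show ρf (σ t) = ρf (γ₂ (t - t))
        rw [hσT, sub_self]
      · simp only [hσdef, if_neg h]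
    by_cases hInt : IntervalIntegrable (fun t => ρf (σ t)) MeasureTheory.volume 0 T₁ ∧
        IntervalIntegrable (fun t => ρf (σ t)) MeasureTheory.volume T₁ (T₁ + T₂)
    · rw [← intervalIntegral.integral_add_adjacent_intervals hInt.1 hInt.2]
      have q₁ : (∫ t in (0:ℝ)..T₁, ρf (σ t)) = ∫ t in (0:ℝ)..T₁, ρf (γ₁ t) :=
        intervalIntegral.integral_congr e₁
      have q₂ : (∫ t in T₁..(T₁ + T₂), ρf (σ t)) = ∫ t in (0:ℝ)..T₂, ρf (γ₂ t) := by
        rw [intervalIntegral.integral_congr e₂]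
        have := intervalIntegral.integral_comp_sub_right (a := T₁) (b := T₁ + T₂)
          (fun u => ρf (γ₂ u)) T₁
        simpa using this
      rw [q₁, q₂]
    · have hni : ¬ IntervalIntegrable (fun t => ρf (σ t)) MeasureTheory.volume 0 (T₁ + T₂) := by
        intro hI
        refine hInt ⟨hI.mono_set ?_, hI.mono_set ?_⟩
        · rw [uIcc_of_le hT₁, uIcc_of_le (by linarith : (0:ℝ) ≤ T₁ + T₂)]
          exact Icc_subset_Icc le_rfl (by linarith)
        · rw [uIcc_of_le (by linarith : T₁ ≤ T₁ + T₂),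
            uIcc_of_le (by linarith : (0:ℝ) ≤ T₁ + T₂)]
          exact Icc_subset_Icc hT₁ le_rfl
      rw [intervalIntegral.integral_undef hni]
      have n₁ : (0:ℝ) ≤ ∫ t in (0:ℝ)..T₁, ρf (γ₁ t) :=
        intervalIntegral.integral_nonneg hT₁ (fun u _ => hρ _)
      have n₂ : (0:ℝ) ≤ ∫ t in (0:ℝ)..T₂, ρf (γ₂ t) :=
        intervalIntegral.integral_nonneg hT₂ (fun u _ => hρ _)
      linarith
  have step1 : ∀ l₂ ∈ confSet e ρf y z,
      confDistWrt e ρf x z - l₂ ≤ confDistWrt e ρf x y := by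
    intro l₂ hl₂
    apply le_csInf h1
    intro l₁ hl₁
    have := key l₁ hl₁ l₂ hl₂
    linarith
  have step2 : confDistWrt e ρf x z - confDistWrt e ρf x y ≤ confDistWrt e ρf y z := by
    apply le_csInf h2
    intro l₂ hl₂
    have := step1 l₂ hl₂
    linarith
  linarith

lemma eC_triangle (hlip : ∀ p q : X, |b p - b q| ≤ dist p q)
    (hGeo : GeodesicSpaceWrt (distFun X)) (x y z : X) :
    confDistWrt (distFun X) (uniformizationDensity b ε) x z ≤
      confDistWrt (distFun X) (uniformizationDensity b ε) x y +
      confDistWrt (distFun X) (uniformizationDensity b ε) y z :=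
  confDist_triangle_gen (fun z => uD_nonneg b ε z)
    (fun a c d => by simpa using dist_triangle a c d)
    (confSet_nonempty hlip hGeo x y) (confSet_nonempty hlip hGeo y z)

end S16C
section S16D1

variable {X : Type*} [MetricSpace X] {b : X → ℝ} {ε K δ : ℝ}

lemma busemann_f_antitone {ρ₀ : ℝ → X} (hρ₀ : IsGeodesicRayWrt (distFun X) ρ₀) (x : X)
    {u U : ℝ} (hu : 0 ≤ u) (huU : u ≤ U) :
    dist (ρ₀ U) x - U ≤ dist (ρ₀ u) x - u := by
  have h1 : dist (ρ₀ u) (ρ₀ U) = U - u := by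
    rw [ray_dist hρ₀ hu (le_trans hu huU), abs_of_nonpos (by linarith)]; ring
  have h2 := dist_triangle (ρ₀ U) (ρ₀ u) x
  rw [dist_comm (ρ₀ U) (ρ₀ u), h1] at h2
  linarith

/-- Busemann growth along a geodesic line emanating from the boundary point. -/
lemma busemann_growth (hGeo : GeodesicSpaceWrt (distFun X))
    (hHyp : DeltaHyperbolicWrt (distFun X) δ) {ρ₀ γ : ℝ → X}
    (hρ₀ : IsGeodesicRayWrt (distFun X) ρ₀) (hγ : IsGeodesicLineWrt (distFun X) γ)
    (hequiv : RayEquivWrt (distFun X) (fun t => γ (-t)) ρ₀) {t' t : ℝ} (htt : t' ≤ t) :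
    busemannWrt (distFun X) ρ₀ (γ t') + (t - t') - 2*δ ≤ busemannWrt (distFun X) ρ₀ (γ t) := by
  obtain ⟨c, hc⟩ := hequiv
  set V : ℝ := max (max (-t') (c + δ - t' + 1)) 0 with hV
  have key : ∀ v, V ≤ v →
      busemannWrt (distFun X) ρ₀ (γ t') + (t - t') - 2*δ ≤ dist (ρ₀ v) (γ t) - v := by
    intro v hv
    have hv0 : 0 ≤ v := le_trans (le_max_right _ _) hv
    have hvt' : -v ≤ t' := by
      have h := le_trans (le_trans (le_max_left (-t') (c + δ - t' + 1)) (le_max_left _ 0)) hv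
      linarith
    have hvc : c + δ - t' + 1 ≤ v :=
      le_trans (le_trans (le_max_right (-t') _) (le_max_left _ 0)) hv
    set A := γ (-v) with hA
    set B := γ t with hB
    set C := ρ₀ v with hC
    have hAB : dist A B = v + t := by
      rw [hA, hB]
      rw [show dist (γ (-v)) (γ t) = distFun X (γ (-v)) (γ t) from rfl, hγ (-v) t,
        abs_of_nonpos (by linarith), neg_sub]
      ring
    set γ₁ : ℝ → X := fun r => γ (-v + r) with hγ₁
    have hseg1 : IsGeodesicSegWrt (distFun X) γ₁ A B := by
      refine ⟨by simp [hγ₁, hA], ?_, ?_⟩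
      · show γ (-v + distFun X A B) = B
        rw [distFun_apply, hAB, hB]
        congr 1; ring
      · intro s _ u _
        show distFun X (γ (-v + s)) (γ (-v + u)) = |s - u|
        rw [hγ (-v + s) (-v + u)]
        congr 1; ring
    obtain ⟨γ₂, hseg2⟩ := hGeo B C
    obtain ⟨γ₃, hseg3⟩ := hGeo C A
    obtain ⟨thin1, -, -⟩ := hHyp A B C γ₁ γ₂ γ₃ hseg1 hseg2 hseg3
    have hpmem : γ t' ∈ segImageWrt (distFun X) γ₁ A B := by
      refine ⟨t' + v, ⟨by linarith, by rw [distFun_apply, hAB]; linarith⟩, ?_⟩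
      show γ (-v + (t' + v)) = γ t'
      congr 1; ring
    obtain ⟨q, hq, hdq⟩ := thin1 (γ t') hpmem
    have hdq' : dist (γ t') q ≤ δ := hdq
    rcases hq with hq2 | hq3
    · -- q is on the side from B to C : conclusion case
      obtain ⟨r, hr, rfl⟩ := hq2
      have hr' : r ∈ Icc (0:ℝ) (dist B C) := by simpa using hr
      have hq0 : dist B (γ₂ r) = r := dist_points_on_geod hseg2 hr'
      have hqC : dist (γ₂ r) C = dist B C - r := by
        have h := hseg2.2.2 r hr (distFun X B C) ⟨by simpa using dist_nonneg, le_rfl⟩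
        rw [hseg2.2.1] at h
        rw [show distFun X (γ₂ r) C = dist (γ₂ r) C from rfl] at h
        rw [h, distFun_apply, abs_of_nonpos (by linarith [hr'.2]), neg_sub]
      have hBt' : dist B (γ t') = t - t' := by
        rw [hB, show dist (γ t) (γ t') = distFun X (γ t) (γ t') from rfl, hγ t t',
          abs_of_nonneg (by linarith)]
      have e1 : dist B (γ t') - δ ≤ dist B (γ₂ r) := by
        have ht := dist_triangle B (γ₂ r) (γ t')
        have hcm := dist_comm (γ₂ r) (γ t')
        linarith
      have e2 : dist (γ t') C - δ ≤ dist (γ₂ r) C := by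
        have h1 := dist_triangle (γ t') (γ₂ r) C
        have h2 := dist_comm (γ t') (γ₂ r)
        linarith
      have hbus := busemann_le hρ₀ (γ t') hv0
      have hsum : dist B C = dist B (γ₂ r) + dist (γ₂ r) C := by rw [hq0, hqC]; ring
      have hcomm1 : dist (ρ₀ v) (γ t) = dist B C := by rw [dist_comm]
      have hcomm2 : dist (ρ₀ v) (γ t') = dist (γ t') C := by rw [dist_comm]
      rw [hcomm1]
      rw [hcomm2] at hbus
      linarith
    · -- q is on the side from C to A : impossible
      exfalso
      obtain ⟨r, hr, rfl⟩ := hq3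
      have hr' : r ∈ Icc (0:ℝ) (dist C A) := by simpa using hr
      have hCq : dist C (γ₃ r) = r := dist_points_on_geod hseg3 hr'
      have hqA : dist (γ₃ r) A = dist C A - r := by
        have h := hseg3.2.2 r hr (distFun X C A) ⟨by simpa using dist_nonneg, le_rfl⟩
        rw [hseg3.2.1] at h
        rw [show distFun X (γ₃ r) A = dist (γ₃ r) A from rfl] at h
        rw [h, distFun_apply, abs_of_nonpos (by linarith [hr'.2]), neg_sub]
      have hAt' : dist A (γ t') = v + t' := by
        rw [hA, show dist (γ (-v)) (γ t') = distFun X (γ (-v)) (γ t') from rfl, hγ (-v) t',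
          abs_of_nonpos (by linarith), neg_sub]
        ring
      have hCA : dist C A ≤ c := by
        have := hc v (mem_Ici.2 hv0)
        rw [show distFun X (γ (-v)) (ρ₀ v) = dist (γ (-v)) (ρ₀ v) from rfl] at this
        rw [hC, hA, dist_comm]
        exact this
      have hCt' : (v + t') - c ≤ dist C (γ t') := by
        have h1 := dist_triangle A C (γ t')
        have h2 : dist A C ≤ c := by rw [dist_comm]; exact hCA
        linarith
      have h1 : dist A (γ t') ≤ dist A (γ₃ r) + δ := by
        have ht := dist_triangle A (γ₃ r) (γ t')
        have := dist_comm (γ t') (γ₃ r)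
        linarith
      have h2 : dist C (γ t') ≤ r + δ := by
        have ht := dist_triangle C (γ₃ r) (γ t')
        have := dist_comm (γ t') (γ₃ r)
        linarith
      have hArw : dist A (γ₃ r) = dist C A - r := by rw [dist_comm]; exact hqA
      linarith
  apply le_csInf (busemann_mem_nonempty ρ₀ (γ t))
  rintro w ⟨u, hu, rfl⟩
  have hu0 : (0:ℝ) ≤ u := hu
  rcases le_total V u with h | h
  · exact key u h
  · have h1 := key V le_rfl
    have h2 := busemann_f_antitone hρ₀ (γ t) hu0 h
    simp only [distFun_apply]
    linarith

/-- The escape-ray interface: from any point there is a unit-speed ray along which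
`b` grows linearly with error `2δ`, starting within `K+1` of the point. -/
lemma exists_escape_ray (hδ : 0 ≤ δ) (hGeo : GeodesicSpaceWrt (distFun X))
    (hHyp : DeltaHyperbolicWrt (distFun X) δ) (hb : BhatStarlike (distFun X) K b) (z : X) :
    ∃ Γ : ℝ → X, (∀ s ∈ Ici (0:ℝ), ∀ t ∈ Ici (0:ℝ), dist (Γ s) (Γ t) = |s - t|) ∧
      dist z (Γ 0) ≤ K + 1 ∧
      ∀ t' t : ℝ, 0 ≤ t' → t' ≤ t → b (Γ t') + (t - t') - 2*δ ≤ b (Γ t) := by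
  rcases hb with ⟨z₀, s₀, hbx, hstar⟩ | ⟨ρ₀, s₀, hray, hbx, hstar⟩
  · obtain ⟨γ, hγray, hγ0, hinf⟩ := hstar z
    have hne : (distFun X z '' (γ '' Ici 0)).Nonempty :=
      ⟨_, ⟨γ 0, ⟨0, mem_Ici.2 le_rfl, rfl⟩, rfl⟩⟩
    obtain ⟨d0, hd0mem, hd0⟩ := exists_lt_of_csInf_lt hne
      (lt_of_le_of_lt hinf (by linarith : K < K + 1))
    obtain ⟨w, ⟨t₀, ht₀, rfl⟩, rfl⟩ := hd0mem
    have ht₀' : (0:ℝ) ≤ t₀ := ht₀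
    refine ⟨fun t => γ (t₀ + t), ?_, ?_, ?_⟩
    · intro s hs t ht
      rw [ray_dist hγray (by linarith [mem_Ici.1 hs]) (by linarith [mem_Ici.1 ht])]
      congr 1; ring
    · have : distFun X z (γ t₀) = dist z (γ (t₀ + 0)) := by rw [add_zero]; rfl
      linarith [hd0.le, this.symm.le, this.le]
    · intro t' t ht' htt'
      rw [hbx, hbx]
      have hd : ∀ u, 0 ≤ u → distFun X (γ (t₀ + u)) z₀ = t₀ + u := by
        intro u hu
        rw [← hγ0, distFun_apply, ray_dist hγray (by linarith) le_rfl, sub_zero,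
          abs_of_nonneg (by linarith)]
      rw [hd t' ht', hd t (le_trans ht' htt')]
      linarith
  · obtain ⟨γ, hline, hequiv, hinf⟩ := hstar z
    have hne : (distFun X z '' range γ).Nonempty := ⟨_, ⟨γ 0, mem_range_self 0, rfl⟩⟩
    obtain ⟨d0, hd0mem, hd0⟩ := exists_lt_of_csInf_lt hne
      (lt_of_le_of_lt hinf (by linarith : K < K + 1))
    obtain ⟨w, ⟨t₀, rfl⟩, rfl⟩ := hd0mem
    refine ⟨fun t => γ (t₀ + t), ?_, ?_, ?_⟩
    · intro s _ t _
      rw [show dist (γ (t₀ + s)) (γ (t₀ + t)) = distFun X (γ (t₀ + s)) (γ (t₀ + t)) from rfl,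
        hline (t₀ + s) (t₀ + t)]
      congr 1; ring
    · have : distFun X z (γ t₀) = dist z (γ (t₀ + 0)) := by rw [add_zero]; rfl
      linarith [hd0.le, this.le]
    · intro t' t ht' htt'
      rw [hbx, hbx]
      have := busemann_growth hGeo hHyp hray hline hequiv
        (show t₀ + t' ≤ t₀ + t by linarith)
      linarith

end S16D1
section S16D2

variable {X : Type*} [MetricSpace X] {b : X → ℝ} {ε K δ : ℝ}

/-- Abbreviation for the conformal distance. -/
abbrev eCD {X : Type*} [MetricSpace X] (b : X → ℝ) (ε : ℝ) : X → X → ℝ :=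
  confDistWrt (distFun X) (uniformizationDensity b ε)

/-- The defining set of `bdryDistWrt`. -/
def bset (e : X → X → ℝ) (x : X) : Set ℝ :=
  { r : ℝ | ∃ u : ℕ → X, CauchyWrt e u ∧ ¬ ConvWrt e u ∧
      Tendsto (fun n => e x (u n)) atTop (𝓝 r) }

lemma bdryDistWrt_eq_bset (e : X → X → ℝ) (x : X) :
    bdryDistWrt e x = sInf (bset e x) := rfl

lemma bset_nonneg {e : X → X → ℝ} (he : ∀ p q : X, 0 ≤ e p q) (x : X) :
    ∀ r ∈ bset e x, 0 ≤ r := by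
  rintro r ⟨u, -, -, hlim⟩
  exact ge_of_tendsto hlim (Filter.Eventually.of_forall fun n => he _ _)

lemma bset_bddBelow {e : X → X → ℝ} (he : ∀ p q : X, 0 ≤ e p q) (x : X) :
    BddBelow (bset e x) := ⟨0, fun r hr => bset_nonneg he x r hr⟩

lemma bdry_nonneg {e : X → X → ℝ} (he : ∀ p q : X, 0 ≤ e p q) (x : X) :
    0 ≤ bdryDistWrt e x := Real.sInf_nonneg (bset_nonneg he x)

lemma tendsto_of_cauchyWrt (hlip : ∀ p q : X, |b p - b q| ≤ dist p q)
    (hGeo : GeodesicSpaceWrt (distFun X)) {u : ℕ → X} (hC : CauchyWrt (eCD b ε) u) (p : X) :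
    ∃ r, Tendsto (fun n => eCD b ε p (u n)) atTop (𝓝 r) := by
  have hcs : CauchySeq (fun n => eCD b ε p (u n)) := by
    rw [Metric.cauchySeq_iff]
    intro θ hθ
    obtain ⟨N, hN⟩ := hC θ hθ
    refine ⟨N, fun m hm n hn => ?_⟩
    have t1 : eCD b ε p (u m) ≤ eCD b ε p (u n) + eCD b ε (u n) (u m) :=
      eC_triangle hlip hGeo _ _ _
    have t2 : eCD b ε p (u n) ≤ eCD b ε p (u m) + eCD b ε (u m) (u n) :=
      eC_triangle hlip hGeo _ _ _
    have b1 := hN n hn m hm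
    have b2 := hN m hm n hn
    rw [Real.dist_eq, abs_sub_lt_iff]
    constructor <;> linarith
  exact cauchySeq_tendsto_of_complete hcs

/-- The main construction: an escaping Cauchy sequence whose limiting distance from `z`
is comparable to the density at `z`. -/
lemma bset_escape (hδ : 0 ≤ δ) (hε : 0 < ε) (hGeo : GeodesicSpaceWrt (distFun X))
    (hHyp : DeltaHyperbolicWrt (distFun X) δ) (hb : BhatStarlike (distFun X) K b) (z : X) :
    ∃ r ∈ bset (eCD b ε) z,
      r ≤ (Real.exp (ε*(K+1)) * (ε*(K+1) + Real.exp (2*ε*δ)) / ε) *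
        uniformizationDensity b ε z := by
  have hlip := bhat_lip hb
  obtain ⟨Γ, hΓiso, hΓz, hΓgrow⟩ := exists_escape_ray hδ hGeo hHyp hb z
  have hΓd : ∀ s t : ℝ, 0 ≤ s → s ≤ t → dist (Γ s) (Γ t) = t - s := by
    intro s t hs hst
    rw [hΓiso s (mem_Ici.2 hs) t (mem_Ici.2 (le_trans hs hst)),
      abs_of_nonpos (by linarith), neg_sub]
  have hdecay : ∀ m u : ℝ, 0 ≤ m → m ≤ u →
      uniformizationDensity b ε (Γ u) ≤
        uniformizationDensity b ε (Γ m) * Real.exp (2*ε*δ) * Real.exp (-(ε*(u - m))) := by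
    intro m u hm hmu
    have hg := hΓgrow m u hm hmu
    rw [uD_apply, uD_apply, ← Real.exp_add, ← Real.exp_add]
    apply Real.exp_le_exp.2
    have h2 : ε*(b (Γ m) + (u - m) - 2*δ) ≤ ε*(b (Γ u)) := mul_le_mul_of_nonneg_left hg hε.le
    nlinarith [h2]
  have hray_eC : ∀ m L : ℝ, 0 ≤ m → 0 ≤ L →
      eCD b ε (Γ m) (Γ (m + L)) ≤
        uniformizationDensity b ε (Γ m) * Real.exp (2*ε*δ) / ε ∧
      eCD b ε (Γ (m + L)) (Γ m) ≤
        uniformizationDensity b ε (Γ m) * Real.exp (2*ε*δ) / ε := by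
    intro m L hm hL
    have hA0 : 0 ≤ uniformizationDensity b ε (Γ m) * Real.exp (2*ε*δ) :=
      mul_nonneg (uD_nonneg b ε _) (Real.exp_pos _).le
    have hfrac : (1 - Real.exp (-(ε*L)))/ε ≤ 1/ε := by
      gcongr
      linarith [Real.exp_pos (-(ε*L))]
    constructor
    · have hadm : ∀ s ∈ Icc (0:ℝ) L, ∀ t ∈ Icc (0:ℝ) L,
          distFun X (Γ (m + s)) (Γ (m + t)) ≤ |s - t| := by
        intro s hs t ht
        rw [distFun_apply, hΓiso (m+s) (mem_Ici.2 (by linarith [hs.1]))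
          (m+t) (mem_Ici.2 (by linarith [ht.1])),
          show m + s - (m + t) = s - t by ring]
      have hadm' : ∀ s ∈ Icc (0:ℝ) L, ∀ t ∈ Icc (0:ℝ) L,
          dist (Γ (m + s)) (Γ (m + t)) ≤ |s - t| := by
        intro s hs t ht; simpa using hadm s hs t ht
      have hmem : (∫ r in (0:ℝ)..L, uniformizationDensity b ε (Γ (m + r))) ∈
          confSet (distFun X) (uniformizationDensity b ε) (Γ m) (Γ (m + L)) :=
        ⟨L, fun r => Γ (m + r), hL, hadm, by simp, rfl, rfl⟩
      refine le_trans (confDist_le_of_mem (fun w => uD_nonneg b ε w) hmem) ?_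
      have hint1 : IntervalIntegrable (fun r => uniformizationDensity b ε (Γ (m + r)))
          MeasureTheory.volume 0 L := adm_uD_intervalIntegrable hlip hL hadm'
      have hint2 : IntervalIntegrable
          (fun r => (uniformizationDensity b ε (Γ m) * Real.exp (2*ε*δ)) * Real.exp (-(ε*r)))
          MeasureTheory.volume 0 L := by
        apply Continuous.intervalIntegrable
        exact continuous_const.mul
          (Real.continuous_exp.comp (continuous_const.mul continuous_id).neg)
      have hptw : ∀ r ∈ Icc (0:ℝ) L, uniformizationDensity b ε (Γ (m + r)) ≤
          (uniformizationDensity b ε (Γ m) * Real.exp (2*ε*δ)) * Real.exp (-(ε*r)) := by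
        intro r hrr
        have h := hdecay m (m + r) hm (by linarith [hrr.1])
        rw [show m + r - m = r by ring] at h
        exact h
      calc (∫ r in (0:ℝ)..L, uniformizationDensity b ε (Γ (m + r)))
          ≤ ∫ r in (0:ℝ)..L,
              (uniformizationDensity b ε (Γ m) * Real.exp (2*ε*δ)) * Real.exp (-(ε*r)) :=
            intervalIntegral.integral_mono_on hL hint1 hint2 hptw
        _ = (uniformizationDensity b ε (Γ m) * Real.exp (2*ε*δ)) *
              ((1 - Real.exp (-(ε*L)))/ε) := by
            rw [intervalIntegral.integral_const_mul, integ_exp_neg hε L]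
        _ ≤ (uniformizationDensity b ε (Γ m) * Real.exp (2*ε*δ)) * (1/ε) :=
            mul_le_mul_of_nonneg_left hfrac hA0
        _ = uniformizationDensity b ε (Γ m) * Real.exp (2*ε*δ) / ε := by ring
    · have hadm : ∀ s ∈ Icc (0:ℝ) L, ∀ t ∈ Icc (0:ℝ) L,
          distFun X (Γ (m + L - s)) (Γ (m + L - t)) ≤ |s - t| := by
        intro s hs t ht
        rw [distFun_apply, hΓiso (m+L-s) (mem_Ici.2 (by linarith [hs.2]))
          (m+L-t) (mem_Ici.2 (by linarith [ht.2])),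
          show m + L - s - (m + L - t) = t - s by ring, abs_sub_comm]
      have hadm' : ∀ s ∈ Icc (0:ℝ) L, ∀ t ∈ Icc (0:ℝ) L,
          dist (Γ (m + L - s)) (Γ (m + L - t)) ≤ |s - t| := by
        intro s hs t ht; simpa using hadm s hs t ht
      have hmem : (∫ r in (0:ℝ)..L, uniformizationDensity b ε (Γ (m + L - r))) ∈
          confSet (distFun X) (uniformizationDensity b ε) (Γ (m + L)) (Γ m) :=
        ⟨L, fun r => Γ (m + L - r), hL, hadm, by simp, by simp, rfl⟩
      refine le_trans (confDist_le_of_mem (fun w => uD_nonneg b ε w) hmem) ?_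
      have hint1 : IntervalIntegrable (fun r => uniformizationDensity b ε (Γ (m + L - r)))
          MeasureTheory.volume 0 L := adm_uD_intervalIntegrable hlip hL hadm'
      have hint2 : IntervalIntegrable
          (fun r => (uniformizationDensity b ε (Γ m) * Real.exp (2*ε*δ)) *
            Real.exp (-(ε*(L - r)))) MeasureTheory.volume 0 L := by
        apply Continuous.intervalIntegrable
        apply continuous_const.mul
        apply Real.continuous_exp.comp
        exact (continuous_const.mul (continuous_const.sub continuous_id)).neg
      have hptw : ∀ r ∈ Icc (0:ℝ) L, uniformizationDensity b ε (Γ (m + L - r)) ≤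
          (uniformizationDensity b ε (Γ m) * Real.exp (2*ε*δ)) * Real.exp (-(ε*(L - r))) := by
        intro r hrr
        have h := hdecay m (m + L - r) hm (by linarith [hrr.2])
        rw [show m + L - r - m = L - r by ring] at h
        exact h
      calc (∫ r in (0:ℝ)..L, uniformizationDensity b ε (Γ (m + L - r)))
          ≤ ∫ r in (0:ℝ)..L,
              (uniformizationDensity b ε (Γ m) * Real.exp (2*ε*δ)) *
                Real.exp (-(ε*(L - r))) :=
            intervalIntegral.integral_mono_on hL hint1 hint2 hptw
        _ = (uniformizationDensity b ε (Γ m) * Real.exp (2*ε*δ)) *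
              ((1 - Real.exp (-(ε*L)))/ε) := by
            rw [intervalIntegral.integral_const_mul, integ_exp_neg_flip hε L]
        _ ≤ (uniformizationDensity b ε (Γ m) * Real.exp (2*ε*δ)) * (1/ε) :=
            mul_le_mul_of_nonneg_left hfrac hA0
        _ = uniformizationDensity b ε (Γ m) * Real.exp (2*ε*δ) / ε := by ring
  set Q : ℝ := uniformizationDensity b ε (Γ 0) * Real.exp (2*ε*δ) with hQ
  have hQpos : 0 < Q := mul_pos (uD_pos b ε _) (Real.exp_pos _)
  have hΓm_le : ∀ m : ℝ, 0 ≤ m →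
      uniformizationDensity b ε (Γ m) ≤ Q * Real.exp (-(ε*m)) := by
    intro m hm
    have h := hdecay 0 m le_rfl hm
    rw [show m - 0 = m by ring] at h
    exact h
  have hpair : ∀ m n : ℕ, m ≤ n →
      eCD b ε (Γ m) (Γ n) ≤ Q * Real.exp (2*ε*δ) * Real.exp (-(ε*m)) / ε ∧
      eCD b ε (Γ n) (Γ m) ≤ Q * Real.exp (2*ε*δ) * Real.exp (-(ε*m)) / ε := by
    intro m n hmn
    have hcast : (m:ℝ) ≤ (n:ℝ) := Nat.cast_le.2 hmn
    obtain ⟨hf, hbk⟩ := hray_eC (m:ℝ) ((n:ℝ) - m) (Nat.cast_nonneg m) (by linarith)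
    rw [show (m:ℝ) + ((n:ℝ) - m) = (n:ℝ) by ring] at hf hbk
    have base := hΓm_le m (Nat.cast_nonneg m)
    have hm2 : uniformizationDensity b ε (Γ m) * Real.exp (2*ε*δ) / ε ≤
        Q * Real.exp (2*ε*δ) * Real.exp (-(ε*m)) / ε := by
      calc uniformizationDensity b ε (Γ m) * Real.exp (2*ε*δ) / ε
          ≤ (Q * Real.exp (-(ε*m))) * Real.exp (2*ε*δ) / ε := by gcongr
        _ = Q * Real.exp (2*ε*δ) * Real.exp (-(ε*m)) / ε := by ring
    exact ⟨le_trans hf hm2, le_trans hbk hm2⟩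
  set u : ℕ → X := fun n => Γ n with hu
  have hCau : CauchyWrt (eCD b ε) u := by
    intro θ hθ
    have htend : Tendsto (fun N : ℕ => Q * Real.exp (2*ε*δ) * Real.exp (-(ε*N)) / ε)
        atTop (𝓝 0) := by
      have h1 : Tendsto (fun N : ℕ => ε*(N:ℝ)) atTop atTop :=
        Tendsto.const_mul_atTop hε tendsto_natCast_atTop_atTop
      have hexp : Tendsto (fun N : ℕ => Real.exp (-(ε*N))) atTop (𝓝 0) :=
        Real.tendsto_exp_atBot.comp (tendsto_neg_atTop_atBot.comp h1)
      have := (hexp.const_mul (Q * Real.exp (2*ε*δ))).div_const ε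
      simpa using this
    obtain ⟨N, hN⟩ := Filter.eventually_atTop.1 (htend.eventually (gt_mem_nhds hθ))
    refine ⟨N, fun m hm n hn => ?_⟩
    rcases le_total m n with h | h
    · exact lt_of_le_of_lt ((hpair m n h).1) (hN m hm)
    · exact lt_of_le_of_lt ((hpair n m h).2) (hN n hn)
  have hnconv : ¬ ConvWrt (eCD b ε) u := by
    rintro ⟨y, hy⟩
    set θ : ℝ := (uniformizationDensity b ε y / ε) * (1 - Real.exp (-(ε*1))) with hθdef
    have hexp1 : Real.exp (-(ε*1)) < 1 := by
      have h := Real.exp_lt_exp.2 (show -(ε*1) < 0 by linarith)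
      simpa [Real.exp_zero] using h
    have hθpos : 0 < θ := mul_pos (div_pos (uD_pos b ε y) hε) (by linarith)
    obtain ⟨n₀, hn₀⟩ := exists_nat_ge (dist (Γ 0) y + 1)
    obtain ⟨N, hN⟩ := (Metric.tendsto_atTop.1 hy) θ hθpos
    set n := max N n₀ with hn
    have h1 := hN n (le_max_left _ _)
    rw [Real.dist_eq, sub_zero,
      abs_of_nonneg (confDist_nonneg (fun w => uD_nonneg b ε w) _ _)] at h1
    have hd1 : (1:ℝ) ≤ dist (u n) y := by
      have hdist : dist (Γ 0) (Γ (n:ℝ)) = (n:ℝ) := by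
        rw [hΓd 0 n le_rfl (Nat.cast_nonneg n), sub_zero]
      have htri := dist_triangle (Γ 0) y (Γ (n:ℝ))
      have hcomm : dist y (Γ (n:ℝ)) = dist (u n) y := by rw [dist_comm]
      have hcast : ((n₀:ℝ)) ≤ (n:ℝ) := Nat.cast_le.2 (le_max_right N n₀)
      rw [hcomm] at htri
      rw [hdist] at htri
      linarith
    have h2 := eC_ge_right hlip hε hGeo (u n) y
    have h3 : θ ≤ (uniformizationDensity b ε y / ε) *
        (1 - Real.exp (-(ε * dist (u n) y))) := by
      rw [hθdef]
      apply mul_le_mul_of_nonneg_left _ (div_nonneg (uD_nonneg b ε y) hε.le)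
      have : Real.exp (-(ε * dist (u n) y)) ≤ Real.exp (-(ε*1)) := by
        apply Real.exp_le_exp.2
        nlinarith
      linarith
    linarith
  obtain ⟨r, hr⟩ := tendsto_of_cauchyWrt hlip hGeo hCau z
  refine ⟨r, ⟨u, hCau, hnconv, hr⟩, ?_⟩
  have ht2 : eCD b ε (Γ 0) (Γ (0:ℕ)) ≤ Q / ε := by
    have := (hray_eC 0 0 le_rfl le_rfl).1
    rw [add_zero] at this
    simpa [hQ] using this
  have hb0 : ∀ n : ℕ, eCD b ε z (u n) ≤ eCD b ε z (Γ 0) + Q / ε := by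
    intro n
    have t1 := eC_triangle (ε := ε) hlip hGeo z (Γ 0) (u n)
    have t2 := (hray_eC 0 (n:ℝ) le_rfl (Nat.cast_nonneg n)).1
    rw [zero_add] at t2
    have t3 : eCD b ε (Γ 0) (Γ (n:ℝ)) ≤ Q / ε := by
      rw [hQ]
      exact t2
    have hun : u n = Γ (n:ℝ) := rfl
    rw [hun]
    calc eCD b ε z (Γ (n:ℝ)) ≤ eCD b ε z (Γ 0) + eCD b ε (Γ 0) (Γ (n:ℝ)) := t1
      _ ≤ eCD b ε z (Γ 0) + Q / ε := by linarith
  have hr_le : r ≤ eCD b ε z (Γ 0) + Q / ε :=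
    le_of_tendsto hr (Filter.Eventually.of_forall hb0)
  have ha0 : eCD b ε z (Γ 0) ≤
      (K+1) * (uniformizationDensity b ε z * Real.exp (ε*(K+1))) := by
    refine le_trans (eC_le_geod hlip hε hGeo z (Γ 0)) ?_
    have h1 : dist z (Γ 0) ≤ K + 1 := hΓz
    have h2 : Real.exp (ε * dist z (Γ 0)) ≤ Real.exp (ε*(K+1)) :=
      Real.exp_le_exp.2 (mul_le_mul_of_nonneg_left h1 hε.le)
    have hK1 : (0:ℝ) ≤ K + 1 := le_trans dist_nonneg h1
    exact mul_le_mul h1 (mul_le_mul_of_nonneg_left h2 (uD_nonneg b ε z)) (mul_nonneg (uD_nonneg b ε z) (Real.exp_pos _).le) hK1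
  have hQz : Q ≤ uniformizationDensity b ε z * Real.exp (ε*(K+1)) * Real.exp (2*ε*δ) := by
    rw [hQ]
    apply mul_le_mul_of_nonneg_right _ (Real.exp_pos _).le
    exact uD_le_of_dist hlip hε z (Γ 0) hΓz
  have expand : (Real.exp (ε*(K+1)) * (ε*(K+1) + Real.exp (2*ε*δ)) / ε) *
      uniformizationDensity b ε z
      = (K+1) * (uniformizationDensity b ε z * Real.exp (ε*(K+1))) +
        (uniformizationDensity b ε z * Real.exp (ε*(K+1)) * Real.exp (2*ε*δ)) / ε := by
    field_simp
  have hQdiv : Q / ε ≤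
      (uniformizationDensity b ε z * Real.exp (ε*(K+1)) * Real.exp (2*ε*δ)) / ε := by
    gcongr
  rw [expand]
  linarith

end S16D2
section S16D3

variable {X : Type*} [MetricSpace X] {b : X → ℝ} {ε K δ : ℝ}

lemma eCD_nonneg (b : X → ℝ) (ε : ℝ) (p q : X) : 0 ≤ eCD b ε p q :=
  confDist_nonneg (fun w => uD_nonneg b ε w) p q

/-- The comparison constant for the boundary distance. -/
def Cone (K ε δ : ℝ) : ℝ := Real.exp (ε*(K+1)) * (ε*(K+1) + Real.exp (2*ε*δ)) / ε

lemma Cone_pos (hK : 0 ≤ K) (hε : 0 < ε) : 0 < Cone K ε δ := by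
  unfold Cone
  apply div_pos _ hε
  apply mul_pos (Real.exp_pos _)
  have h1 : 0 ≤ ε*(K+1) := by positivity
  linarith [Real.exp_pos (2*ε*δ)]

lemma one_le_Cone (hK : 0 ≤ K) (hε : 0 < ε) (hδ : 0 ≤ δ) : 1 ≤ ε * Cone K ε δ := by
  unfold Cone
  rw [mul_div_assoc', mul_comm, mul_div_assoc, div_self hε.ne', mul_one]
  have h1 : (1:ℝ) ≤ Real.exp (ε*(K+1)) := by
    rw [show (1:ℝ) = Real.exp 0 from (Real.exp_zero).symm]
    exact Real.exp_le_exp.2 (by positivity)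
  have h2 : (1:ℝ) ≤ ε*(K+1) + Real.exp (2*ε*δ) := by
    have h3 : (1:ℝ) ≤ Real.exp (2*ε*δ) := by
      rw [show (1:ℝ) = Real.exp 0 from (Real.exp_zero).symm]
      exact Real.exp_le_exp.2 (by positivity)
    have : 0 ≤ ε*(K+1) := by positivity
    linarith
  nlinarith

lemma bset_nonempty (hδ : 0 ≤ δ) (hε : 0 < ε) (hGeo : GeodesicSpaceWrt (distFun X))
    (hHyp : DeltaHyperbolicWrt (distFun X) δ) (hb : BhatStarlike (distFun X) K b) (z : X) :
    (bset (eCD b ε) z).Nonempty := by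
  obtain ⟨r, hmem, -⟩ := bset_escape hδ hε hGeo hHyp hb z
  exact ⟨r, hmem⟩

lemma bdry_le (hδ : 0 ≤ δ) (hε : 0 < ε) (hGeo : GeodesicSpaceWrt (distFun X))
    (hHyp : DeltaHyperbolicWrt (distFun X) δ) (hb : BhatStarlike (distFun X) K b) (z : X) :
    bdryDistWrt (eCD b ε) z ≤ Cone K ε δ * uniformizationDensity b ε z := by
  obtain ⟨r, hmem, hle⟩ := bset_escape hδ hε hGeo hHyp hb z
  rw [bdryDistWrt_eq_bset]
  exact le_trans (csInf_le (bset_bddBelow (eCD_nonneg b ε) z) hmem) hle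

lemma bdry_ge [ProperSpace X] (hδ : 0 ≤ δ) (hε : 0 < ε)
    (hGeo : GeodesicSpaceWrt (distFun X)) (hHyp : DeltaHyperbolicWrt (distFun X) δ)
    (hb : BhatStarlike (distFun X) K b) (z : X) :
    uniformizationDensity b ε z / ε ≤ bdryDistWrt (eCD b ε) z := by
  have hlip := bhat_lip hb
  rw [bdryDistWrt_eq_bset]
  apply le_csInf (bset_nonempty hδ hε hGeo hHyp hb z)
  rintro r ⟨u, hC, hnc, hlim⟩
  have hdist : Tendsto (fun n => dist z (u n)) atTop atTop := by
    by_contra hcon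
    rw [Filter.tendsto_atTop] at hcon
    push_neg at hcon
    obtain ⟨R, hR⟩ := hcon
    have hR' : ∃ᶠ n in atTop, dist z (u n) < R := by simpa [not_le] using hR
    obtain ⟨φ, hφmono, hφ⟩ := Filter.extraction_of_frequently_atTop hR'
    have hball : ∀ k, u (φ k) ∈ closedBall z R := fun k => by
      rw [Metric.mem_closedBall, dist_comm]; exact (hφ k).le
    obtain ⟨y, -, ψ, hψmono, hψ⟩ := (isCompact_closedBall z R).tendsto_subseq hball
    apply hnc
    refine ⟨y, ?_⟩
    rw [Metric.tendsto_atTop]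
    intro θ hθ
    obtain ⟨N₁, hN₁⟩ := hC (θ/2) (by linarith)
    set W : ℝ := uniformizationDensity b ε y * Real.exp (2*ε) with hW
    have hWpos : 0 < W := mul_pos (uD_pos b ε y) (Real.exp_pos _)
    have hpos : 0 < min 1 (θ/(2*(W + 1))) :=
      lt_min one_pos (div_pos (by linarith) (by linarith))
    obtain ⟨N₂, hN₂⟩ := Metric.tendsto_atTop.1 hψ _ hpos
    set j := max N₂ N₁ with hj
    set M := φ (ψ j) with hM
    have hMk : dist (u M) y < min 1 (θ/(2*(W + 1))) := hN₂ j (le_max_left _ _)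
    have hM1 : N₁ ≤ M := by
      calc N₁ ≤ j := le_max_right _ _
        _ ≤ ψ j := hψmono.le_apply
        _ ≤ φ (ψ j) := hφmono.le_apply
    have hd1 : dist (u M) y < 1 := lt_of_lt_of_le hMk (min_le_left _ _)
    have hd2 : dist (u M) y < θ/(2*(W + 1)) := lt_of_lt_of_le hMk (min_le_right _ _)
    have hEMy : eCD b ε (u M) y < θ/2 := by
      have h1 := eC_le_geod hlip hε hGeo (u M) y
      have huDM : uniformizationDensity b ε (u M) ≤
          uniformizationDensity b ε y * Real.exp (ε*1) := by
        apply uD_le_of_dist hlip hε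
        rw [dist_comm]; exact hd1.le
      have hexpd : Real.exp (ε * dist (u M) y) ≤ Real.exp (ε*1) :=
        Real.exp_le_exp.2 (mul_le_mul_of_nonneg_left hd1.le hε.le)
      have h2 : eCD b ε (u M) y ≤ dist (u M) y * W := by
        refine le_trans h1 ?_
        rw [hW, show Real.exp (2*ε) = Real.exp (ε*1) * Real.exp (ε*1) by
          rw [← Real.exp_add]; ring_nf]
        calc dist (u M) y * (uniformizationDensity b ε (u M) *
              Real.exp (ε * dist (u M) y))
            ≤ dist (u M) y * ((uniformizationDensity b ε y * Real.exp (ε*1)) *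
              Real.exp (ε*1)) := by
              apply mul_le_mul_of_nonneg_left _ dist_nonneg
              exact mul_le_mul huDM hexpd (Real.exp_pos _).le
                (mul_nonneg (uD_nonneg b ε y) (Real.exp_pos _).le)
          _ = dist (u M) y * (uniformizationDensity b ε y *
              (Real.exp (ε*1) * Real.exp (ε*1))) := by ring
      have h3 : dist (u M) y * W < (θ/(2*(W + 1))) * W :=
        mul_lt_mul_of_pos_right hd2 hWpos
      have h4 : (θ/(2*(W + 1))) * W < θ/2 := by
        rw [div_mul_eq_mul_div, div_lt_div_iff₀ (by linarith) (by linarith)]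
        nlinarith
      linarith
    refine ⟨N₁, fun n hn => ?_⟩
    have htri := eC_triangle (ε := ε) hlip hGeo (u n) (u M) y
    have hC2 := hN₁ n hn M hM1
    rw [Real.dist_eq, sub_zero, abs_of_nonneg (eCD_nonneg b ε _ _)]
    calc eCD b ε (u n) y ≤ eCD b ε (u n) (u M) + eCD b ε (u M) y := htri
      _ < θ/2 + θ/2 := add_lt_add hC2 hEMy
      _ = θ := by ring
  have hlow : ∀ n, (uniformizationDensity b ε z / ε) *
      (1 - Real.exp (-(ε * dist z (u n)))) ≤ eCD b ε z (u n) :=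
    fun n => eC_ge_left hlip hε hGeo z (u n)
  have hexp0 : Tendsto (fun n => Real.exp (-(ε * dist z (u n)))) atTop (𝓝 0) :=
    Real.tendsto_exp_atBot.comp (tendsto_neg_atTop_atBot.comp
      (Tendsto.const_mul_atTop hε hdist))
  have hlim2 : Tendsto (fun n => (uniformizationDensity b ε z / ε) *
      (1 - Real.exp (-(ε * dist z (u n))))) atTop (𝓝 (uniformizationDensity b ε z / ε)) := by
    have h1 := ((tendsto_const_nhds (x := (1:ℝ)) (f := atTop (α := ℕ))).sub hexp0).const_mul
      (uniformizationDensity b ε z / ε)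
    simpa using h1
  exact le_of_tendsto_of_tendsto' hlim2 hlim hlow

lemma bdry_pos [ProperSpace X] (hδ : 0 ≤ δ) (hε : 0 < ε)
    (hGeo : GeodesicSpaceWrt (distFun X)) (hHyp : DeltaHyperbolicWrt (distFun X) δ)
    (hb : BhatStarlike (distFun X) K b) (z : X) : 0 < bdryDistWrt (eCD b ε) z :=
  lt_of_lt_of_le (div_pos (uD_pos b ε z) hε) (bdry_ge hδ hε hGeo hHyp hb z)

lemma bdry_lip (hδ : 0 ≤ δ) (hε : 0 < ε) (hGeo : GeodesicSpaceWrt (distFun X))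
    (hHyp : DeltaHyperbolicWrt (distFun X) δ) (hb : BhatStarlike (distFun X) K b)
    (p q : X) :
    bdryDistWrt (eCD b ε) p ≤ eCD b ε p q + bdryDistWrt (eCD b ε) q := by
  have hlip := bhat_lip hb
  have hkey : ∀ r ∈ bset (eCD b ε) q, bdryDistWrt (eCD b ε) p ≤ eCD b ε p q + r := by
    rintro r ⟨u, hC, hnc, hlim⟩
    obtain ⟨r', hr'⟩ := tendsto_of_cauchyWrt hlip hGeo hC p
    have hmem : r' ∈ bset (eCD b ε) p := ⟨u, hC, hnc, hr'⟩
    have h1 : bdryDistWrt (eCD b ε) p ≤ r' := by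
      rw [bdryDistWrt_eq_bset]
      exact csInf_le (bset_bddBelow (eCD_nonneg b ε) p) hmem
    have h2 : r' ≤ eCD b ε p q + r := by
      apply le_of_tendsto_of_tendsto' hr' (Tendsto.const_add (eCD b ε p q) hlim)
      intro n
      exact eC_triangle (ε := ε) hlip hGeo p q (u n)
    linarith
  have hne : (bset (eCD b ε) q).Nonempty := bset_nonempty hδ hε hGeo hHyp hb q
  have h3 : bdryDistWrt (eCD b ε) p - eCD b ε p q ≤ sInf (bset (eCD b ε) q) :=
    le_csInf hne (fun r hr => by have := hkey r hr; linarith)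
  rw [bdryDistWrt_eq_bset (eCD b ε) q]
  linarith

end S16D3
section S16E1

variable {X : Type*} [MetricSpace X] {b : X → ℝ} {ε K δ : ℝ}

lemma aux_exp_half {v : ℝ} (h0 : 0 ≤ v) (h2 : v ≤ 1/2) : Real.exp (-(2*v)) ≤ 1 - v := by
  have h1 : 1 + 2*v ≤ Real.exp (2*v) := by
    have := Real.add_one_le_exp (2*v); linarith
  have hpos : (0:ℝ) < 1 + 2*v := by linarith
  have h3 : Real.exp (-(2*v)) * Real.exp (2*v) = 1 := by
    rw [← Real.exp_add]; simp
  nlinarith [Real.exp_pos (-(2*v))]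

lemma quasiHyp_eq (e : X → X → ℝ) :
    quasiHypWrt e = confDistWrt e (fun z => (bdryDistWrt e z)⁻¹) := rfl

lemma hIn_nonneg (b : X → ℝ) (ε : ℝ) (z : X) : 0 ≤ (bdryDistWrt (eCD b ε) z)⁻¹ :=
  inv_nonneg.2 (bdry_nonneg (eCD_nonneg b ε) z)

lemma hIn_le [ProperSpace X] (hδ : 0 ≤ δ) (hε : 0 < ε)
    (hGeo : GeodesicSpaceWrt (distFun X)) (hHyp : DeltaHyperbolicWrt (distFun X) δ)
    (hb : BhatStarlike (distFun X) K b) (z : X) :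
    (bdryDistWrt (eCD b ε) z)⁻¹ ≤ ε / uniformizationDensity b ε z := by
  have h1 := bdry_ge hδ hε hGeo hHyp hb z
  have h2 : 0 < uniformizationDensity b ε z / ε := div_pos (uD_pos b ε z) hε
  calc (bdryDistWrt (eCD b ε) z)⁻¹ ≤ (uniformizationDensity b ε z / ε)⁻¹ :=
        inv_anti₀ h2 h1
    _ = ε / uniformizationDensity b ε z := by rw [inv_div]

lemma hIn_ge [ProperSpace X] (hδ : 0 ≤ δ) (hε : 0 < ε)
    (hGeo : GeodesicSpaceWrt (distFun X)) (hHyp : DeltaHyperbolicWrt (distFun X) δ)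
    (hb : BhatStarlike (distFun X) K b) (hK : 0 ≤ K) (z : X) :
    (Cone K ε δ * uniformizationDensity b ε z)⁻¹ ≤ (bdryDistWrt (eCD b ε) z)⁻¹ :=
  inv_anti₀ (bdry_pos hδ hε hGeo hHyp hb z) (bdry_le hδ hε hGeo hHyp hb z)

/-- Along an `eCD`-admissible curve the boundary distance is 1-Lipschitz, hence the
quasihyperbolic integrand is continuous. -/
lemma kadm_integrand_contOn [ProperSpace X] (hδ : 0 ≤ δ) (hε : 0 < ε)
    (hGeo : GeodesicSpaceWrt (distFun X)) (hHyp : DeltaHyperbolicWrt (distFun X) δ)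
    (hb : BhatStarlike (distFun X) K b) {T : ℝ} {σ : ℝ → X}
    (hadm : ∀ s ∈ Icc (0:ℝ) T, ∀ t ∈ Icc (0:ℝ) T, eCD b ε (σ s) (σ t) ≤ |s - t|) :
    ContinuousOn (fun t => (bdryDistWrt (eCD b ε) (σ t))⁻¹) (Icc 0 T) := by
  have hbl : LipschitzOnWith 1 (fun t => bdryDistWrt (eCD b ε) (σ t)) (Icc 0 T) := by
    apply LipschitzOnWith.of_dist_le_mul
    intro s hs t ht
    rw [NNReal.coe_one, one_mul, Real.dist_eq, Real.dist_eq, abs_sub_le_iff]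
    constructor
    · have h1 := bdry_lip hδ hε hGeo hHyp hb (σ s) (σ t)
      have h2 := hadm s hs t ht
      linarith
    · have h1 := bdry_lip hδ hε hGeo hHyp hb (σ t) (σ s)
      have h2 := hadm t ht s hs
      rw [abs_sub_comm] at h2
      linarith
  exact hbl.continuousOn.inv₀ (fun t _ => (bdry_pos hδ hε hGeo hHyp hb (σ t)).ne')

/-- Conformal distance bound along a geodesic with a pointwise density bound. -/
lemma eC_le_on_geod (hlip : ∀ p q : X, |b p - b q| ≤ dist p q) (hε : 0 < ε)
    {p q : X} {γ : ℝ → X} (hγ : IsGeodesicSegWrt (distFun X) γ p q) {c : ℝ}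
    (hcb : ∀ u ∈ Icc (0:ℝ) (dist p q), uniformizationDensity b ε (γ u) ≤ c)
    {a a' : ℝ} (ha : 0 ≤ a) (haa : a ≤ a') (ha' : a' ≤ dist p q) :
    eCD b ε (γ a) (γ a') ≤ c * (a' - a) ∧ eCD b ε (γ a') (γ a) ≤ c * (a' - a) := by
  have hgeod : ∀ s ∈ Icc (0:ℝ) (dist p q), ∀ t ∈ Icc (0:ℝ) (dist p q),
      dist (γ s) (γ t) = |s - t| := by
    intro s hs t ht
    have := hγ.2.2 s (by simpa using hs) t (by simpa using ht)
    simpa using this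
  have hL : 0 ≤ a' - a := by linarith
  constructor
  · have hadm : ∀ s ∈ Icc (0:ℝ) (a'-a), ∀ t ∈ Icc (0:ℝ) (a'-a),
        distFun X (γ (a + s)) (γ (a + t)) ≤ |s - t| := by
      intro s hs t ht
      rw [distFun_apply, hgeod (a+s) ⟨by linarith [hs.1], by linarith [hs.2]⟩
        (a+t) ⟨by linarith [ht.1], by linarith [ht.2]⟩,
        show a + s - (a + t) = s - t by ring]
    have hadm' : ∀ s ∈ Icc (0:ℝ) (a'-a), ∀ t ∈ Icc (0:ℝ) (a'-a),
        dist (γ (a + s)) (γ (a + t)) ≤ |s - t| := by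
      intro s hs t ht; simpa using hadm s hs t ht
    have hmem : (∫ r in (0:ℝ)..(a'-a), uniformizationDensity b ε (γ (a + r))) ∈
        confSet (distFun X) (uniformizationDensity b ε) (γ a) (γ a') :=
      ⟨a'-a, fun r => γ (a + r), hL, hadm, by simp, by show γ (a + (a'-a)) = γ a'; congr 1; ring, rfl⟩
    refine le_trans (confDist_le_of_mem (fun w => uD_nonneg b ε w) hmem) ?_
    calc (∫ r in (0:ℝ)..(a'-a), uniformizationDensity b ε (γ (a + r)))
        ≤ ∫ _r in (0:ℝ)..(a'-a), c := by
          apply intervalIntegral.integral_mono_on hL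
            (adm_uD_intervalIntegrable hlip hL hadm') intervalIntegrable_const
          intro r hr
          exact hcb (a + r) ⟨by linarith [hr.1], by linarith [hr.2]⟩
      _ = (a' - a) * c := by rw [intervalIntegral.integral_const, smul_eq_mul, sub_zero]
      _ = c * (a' - a) := by ring
  · have hadm : ∀ s ∈ Icc (0:ℝ) (a'-a), ∀ t ∈ Icc (0:ℝ) (a'-a),
        distFun X (γ (a' - s)) (γ (a' - t)) ≤ |s - t| := by
      intro s hs t ht
      rw [distFun_apply, hgeod (a'-s) ⟨by linarith [hs.2], by linarith [hs.1]⟩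
        (a'-t) ⟨by linarith [ht.2], by linarith [ht.1]⟩,
        show a' - s - (a' - t) = t - s by ring, abs_sub_comm]
    have hadm' : ∀ s ∈ Icc (0:ℝ) (a'-a), ∀ t ∈ Icc (0:ℝ) (a'-a),
        dist (γ (a' - s)) (γ (a' - t)) ≤ |s - t| := by
      intro s hs t ht; simpa using hadm s hs t ht
    have hmem : (∫ r in (0:ℝ)..(a'-a), uniformizationDensity b ε (γ (a' - r))) ∈
        confSet (distFun X) (uniformizationDensity b ε) (γ a') (γ a) :=
      ⟨a'-a, fun r => γ (a' - r), hL, hadm, by simp, by show γ (a' - (a'-a)) = γ a; congr 1; ring, rfl⟩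
    refine le_trans (confDist_le_of_mem (fun w => uD_nonneg b ε w) hmem) ?_
    calc (∫ r in (0:ℝ)..(a'-a), uniformizationDensity b ε (γ (a' - r)))
        ≤ ∫ _r in (0:ℝ)..(a'-a), c := by
          apply intervalIntegral.integral_mono_on hL
            (adm_uD_intervalIntegrable hlip hL hadm') intervalIntegrable_const
          intro r hr
          exact hcb (a' - r) ⟨by linarith [hr.2], by linarith [hr.1]⟩
      _ = (a' - a) * c := by rw [intervalIntegral.integral_const, smul_eq_mul, sub_zero]
      _ = c * (a' - a) := by ring

/-- Admissibility (w.r.t. `eCD`) of the rescaled geodesic. -/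
lemma scaled_geod_adm (hlip : ∀ p q : X, |b p - b q| ≤ dist p q) (hε : 0 < ε)
    {p q : X} {γ : ℝ → X} (hγ : IsGeodesicSegWrt (distFun X) γ p q) {c : ℝ} (hc : 0 < c)
    (hcb : ∀ u ∈ Icc (0:ℝ) (dist p q), uniformizationDensity b ε (γ u) ≤ c) :
    ∀ s ∈ Icc (0:ℝ) (c * dist p q), ∀ t ∈ Icc (0:ℝ) (c * dist p q),
      eCD b ε (γ (s/c)) (γ (t/c)) ≤ |s - t| := by
  have main : ∀ s t : ℝ, 0 ≤ s → s ≤ t → t ≤ c * dist p q →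
      eCD b ε (γ (s/c)) (γ (t/c)) ≤ t - s ∧ eCD b ε (γ (t/c)) (γ (s/c)) ≤ t - s := by
    intro s t hs hst htc
    have h1 : (0:ℝ) ≤ s/c := div_nonneg hs hc.le
    have h2 : s/c ≤ t/c := by gcongr
    have h3 : t/c ≤ dist p q := by
      rw [div_le_iff₀ hc]
      calc t ≤ c * dist p q := htc
        _ = dist p q * c := mul_comm _ _
    obtain ⟨hf, hbk⟩ := eC_le_on_geod hlip hε hγ hcb h1 h2 h3
    have heq : c * (t/c - s/c) = t - s := by field_simp
    rw [heq] at hf hbk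
    exact ⟨hf, hbk⟩
  intro s hs t ht
  rcases le_total s t with h | h
  · have := (main s t hs.1 h ht.2).1
    calc eCD b ε (γ (s/c)) (γ (t/c)) ≤ t - s := this
      _ ≤ |s - t| := by rw [abs_sub_comm]; exact le_abs_self _
  · have := (main t s ht.1 h hs.2).2
    calc eCD b ε (γ (s/c)) (γ (t/c)) ≤ s - t := this
      _ ≤ |s - t| := le_abs_self _

/-- The defining set for the quasihyperbolic distance is nonempty. -/
lemma kset_nonempty (hlip : ∀ p q : X, |b p - b q| ≤ dist p q) (hε : 0 < ε)
    (hGeo : GeodesicSpaceWrt (distFun X)) (p q : X) :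
    (confSet (eCD b ε) (fun z => (bdryDistWrt (eCD b ε) z)⁻¹) p q).Nonempty := by
  obtain ⟨γ, hγ⟩ := hGeo p q
  set D := dist p q with hD
  set c : ℝ := uniformizationDensity b ε p * Real.exp (ε * D) with hc
  have hcpos : 0 < c := mul_pos (uD_pos b ε p) (Real.exp_pos _)
  have hcb : ∀ u ∈ Icc (0:ℝ) D, uniformizationDensity b ε (γ u) ≤ c := by
    intro u hu
    rw [hc]
    apply uD_le_of_dist hlip hε
    rw [dist_points_on_geod hγ hu]
    exact hu.2
  have hadm := scaled_geod_adm hlip hε hγ hcpos hcb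
  refine ⟨_, c * D, fun t => γ (t/c), by positivity, hadm, ?_, ?_, rfl⟩
  · show γ (0/c) = p
    rw [zero_div, hγ.1]
  · show γ (c * D / c) = q
    rw [mul_div_cancel_left₀ _ hcpos.ne']
    have := hγ.2.1
    simpa using this

lemma k_triangle (hδ : 0 ≤ δ) (hlip : ∀ p q : X, |b p - b q| ≤ dist p q) (hε : 0 < ε)
    (hGeo : GeodesicSpaceWrt (distFun X)) (x y z : X) :
    quasiHypWrt (eCD b ε) x z ≤ quasiHypWrt (eCD b ε) x y + quasiHypWrt (eCD b ε) y z := by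
  rw [quasiHyp_eq]
  exact confDist_triangle_gen (fun w => hIn_nonneg b ε w)
    (fun a c d => eC_triangle (ε := ε) hlip hGeo a c d)
    (kset_nonempty hlip hε hGeo x y) (kset_nonempty hlip hε hGeo y z)

/-- The quasihyperbolic distance of nearby points is linearly bounded. -/
lemma k_le_piece [ProperSpace X] (hδ : 0 ≤ δ) (hε : 0 < ε)
    (hGeo : GeodesicSpaceWrt (distFun X)) (hHyp : DeltaHyperbolicWrt (distFun X) δ)
    (hb : BhatStarlike (distFun X) K b) {p q : X} (hpq : dist p q ≤ 1) :
    quasiHypWrt (eCD b ε) p q ≤ (ε * Real.exp (2*ε)) * dist p q := by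
  have hlip := bhat_lip hb
  obtain ⟨γ, hγ⟩ := hGeo p q
  set D := dist p q with hD
  have hD0 : (0:ℝ) ≤ D := dist_nonneg
  set c : ℝ := uniformizationDensity b ε p * Real.exp ε with hc
  have hcpos : 0 < c := mul_pos (uD_pos b ε p) (Real.exp_pos _)
  have hcb : ∀ u ∈ Icc (0:ℝ) D, uniformizationDensity b ε (γ u) ≤ c := by
    intro u hu
    rw [hc]
    calc uniformizationDensity b ε (γ u) ≤
        uniformizationDensity b ε p * Real.exp (ε * u) := by
          apply uD_le_of_dist hlip hε
          rw [dist_points_on_geod hγ hu]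
      _ ≤ uniformizationDensity b ε p * Real.exp ε := by
          apply mul_le_mul_of_nonneg_left _ (uD_nonneg b ε p)
          apply Real.exp_le_exp.2
          nlinarith [hu.1, hu.2]
  have hadm := scaled_geod_adm hlip hε hγ hcpos hcb
  have h0 : γ ((0:ℝ)/c) = p := by rw [zero_div, hγ.1]
  have h1 : γ (c * D / c) = q := by
    rw [mul_div_cancel_left₀ _ hcpos.ne']
    simpa using hγ.2.1
  have hT0 : (0:ℝ) ≤ c * D := by positivity
  have hmem : (∫ t in (0:ℝ)..(c*D), (bdryDistWrt (eCD b ε) (γ (t/c)))⁻¹) ∈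
      confSet (eCD b ε) (fun z => (bdryDistWrt (eCD b ε) z)⁻¹) p q :=
    ⟨c * D, fun t => γ (t/c), hT0, hadm, h0, h1, rfl⟩
  rw [quasiHyp_eq]
  refine le_trans (confDist_le_of_mem (fun w => hIn_nonneg b ε w) hmem) ?_
  -- bound the integral
  have hlowd : ∀ t ∈ Icc (0:ℝ) (c*D),
      (bdryDistWrt (eCD b ε) (γ (t/c)))⁻¹ ≤ ε * Real.exp ε / uniformizationDensity b ε p := by
    intro t ht
    have htc : t/c ∈ Icc (0:ℝ) D := by
      constructor
      · exact div_nonneg ht.1 hcpos.le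
      · rw [div_le_iff₀ hcpos]
        calc t ≤ c * D := ht.2
          _ = D * c := mul_comm _ _
    have h2 : uniformizationDensity b ε p * Real.exp (-(ε * 1)) ≤
        uniformizationDensity b ε (γ (t/c)) := by
      apply uD_ge_of_dist hlip hε
      rw [dist_points_on_geod hγ htc]
      exact le_trans htc.2 hpq
    have h3 := hIn_le hδ hε hGeo hHyp hb (γ (t/c))
    have h4 : ε / uniformizationDensity b ε (γ (t/c)) ≤
        ε / (uniformizationDensity b ε p * Real.exp (-(ε*1))) := by
      apply div_le_div_of_nonneg_left hε.le _ h2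
      exact mul_pos (uD_pos b ε p) (Real.exp_pos _)
    have h5 : ε / (uniformizationDensity b ε p * Real.exp (-(ε*1))) =
        ε * Real.exp ε / uniformizationDensity b ε p := by
      rw [Real.exp_neg]
      rw [mul_one]
      field_simp
    rw [h5] at h4
    exact le_trans h3 h4
  have hcont := kadm_integrand_contOn hδ hε hGeo hHyp hb hadm
  have hint : IntervalIntegrable (fun t => (bdryDistWrt (eCD b ε) (γ (t/c)))⁻¹)
      MeasureTheory.volume 0 (c*D) := by
    apply ContinuousOn.intervalIntegrable
    rw [uIcc_of_le hT0]
    exact hcont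
  calc (∫ t in (0:ℝ)..(c*D), (bdryDistWrt (eCD b ε) (γ (t/c)))⁻¹)
      ≤ ∫ _t in (0:ℝ)..(c*D), (ε * Real.exp ε / uniformizationDensity b ε p) :=
        intervalIntegral.integral_mono_on hT0 hint intervalIntegrable_const hlowd
    _ = (c*D) * (ε * Real.exp ε / uniformizationDensity b ε p) := by
        rw [intervalIntegral.integral_const, smul_eq_mul, sub_zero]
    _ = (ε * Real.exp (2*ε)) * D := by
        rw [hc, show Real.exp (2*ε) = Real.exp ε * Real.exp ε by
          rw [← Real.exp_add]; ring_nf]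
        field_simp [(uD_pos b ε p).ne']

/-- Upper bound for the quasihyperbolic distance. -/
lemma k_le [ProperSpace X] (hδ : 0 ≤ δ) (hε : 0 < ε)
    (hGeo : GeodesicSpaceWrt (distFun X)) (hHyp : DeltaHyperbolicWrt (distFun X) δ)
    (hb : BhatStarlike (distFun X) K b) (x y : X) :
    quasiHypWrt (eCD b ε) x y ≤ (ε * Real.exp (2*ε)) * dist x y := by
  have hlip := bhat_lip hb
  obtain ⟨γ, hγ⟩ := hGeo x y
  set D := dist x y with hD
  have hD0 : (0:ℝ) ≤ D := dist_nonneg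
  set n : ℕ := ⌊D⌋₊ + 1 with hn
  have hnpos : 0 < (n:ℝ) := by positivity
  have hDn : D < n := by
    rw [hn]
    push_cast
    exact Nat.lt_floor_add_one D
  have hΔ : D / n ≤ 1 := by
    rw [div_le_one hnpos]
    linarith
  have hΔ0 : 0 ≤ D / n := div_nonneg hD0 hnpos.le
  have hdistp : ∀ j : ℕ, j + 1 ≤ n →
      dist (γ (j * (D/n))) (γ ((j+1:ℕ) * (D/n))) = D/n := by
    intro j hj
    have hj1 : ((j:ℝ)+1) ≤ n := by exact_mod_cast hj
    have hmem1 : (j:ℝ) * (D/n) ∈ Icc (0:ℝ) D := by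
      constructor
      · positivity
      · calc (j:ℝ) * (D/n) ≤ (n:ℝ) * (D/n) :=
            mul_le_mul_of_nonneg_right (by linarith : (j:ℝ) ≤ (n:ℝ)) hΔ0
          _ = D := by field_simp
    have hmem2 : ((j:ℝ)+1) * (D/n) ∈ Icc (0:ℝ) D := by
      constructor
      · positivity
      · calc ((j:ℝ)+1) * (D/n) ≤ (n:ℝ) * (D/n) :=
            mul_le_mul_of_nonneg_right hj1 hΔ0
          _ = D := by field_simp
    have h := hγ.2.2 ((j:ℝ) * (D/n)) (by simpa using hmem1) (((j:ℝ)+1) * (D/n))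
      (by simpa using hmem2)
    rw [show ((j:ℕ)+1:ℕ) * (D/n) = ((j:ℝ)+1) * (D/n) by push_cast; ring]
    simp only [distFun_apply] at h
    rw [h, show (j:ℝ) * (D/n) - ((j:ℝ)+1) * (D/n) = -(D/n) by ring, abs_neg,
      abs_of_nonneg hΔ0]
  have claim : ∀ j : ℕ, j ≤ n →
      quasiHypWrt (eCD b ε) x (γ (j * (D/n))) ≤ j * ((ε * Real.exp (2*ε)) * (D/n)) := by
    intro j
    induction j with
    | zero =>
      intro _
      have h0 : γ ((0:ℕ) * (D/n)) = x := by
        rw [show ((0:ℕ):ℝ) * (D/n) = 0 by push_cast; ring, hγ.1]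
      rw [h0]
      have := k_le_piece (K := K) hδ hε hGeo hHyp hb (p := x) (q := x)
        (by rw [dist_self]; norm_num)
      simpa using this
    | succ j ih =>
      intro hj
      have hjn : j ≤ n := by omega
      have htri := k_triangle hδ hlip hε hGeo x (γ (j * (D/n))) (γ ((j+1:ℕ) * (D/n)))
      have hstep : quasiHypWrt (eCD b ε) (γ (j * (D/n))) (γ ((j+1:ℕ) * (D/n))) ≤
          (ε * Real.exp (2*ε)) * (D/n) := by
        have hd := hdistp j hj
        have := k_le_piece (K := K) hδ hε hGeo hHyp hb
          (p := γ (j * (D/n))) (q := γ ((j+1:ℕ) * (D/n))) (by rw [hd]; exact hΔ)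
        rw [hd] at this
        exact this
      have hih := ih hjn
      calc quasiHypWrt (eCD b ε) x (γ ((j+1:ℕ) * (D/n)))
          ≤ quasiHypWrt (eCD b ε) x (γ (j * (D/n))) +
            quasiHypWrt (eCD b ε) (γ (j * (D/n))) (γ ((j+1:ℕ) * (D/n))) := htri
        _ ≤ j * ((ε * Real.exp (2*ε)) * (D/n)) + (ε * Real.exp (2*ε)) * (D/n) := by
            linarith
        _ = ((j+1:ℕ):ℝ) * ((ε * Real.exp (2*ε)) * (D/n)) := by push_cast; ring
  have hfin := claim n le_rfl
  have hend : γ ((n:ℝ) * (D/n)) = y := by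
    rw [show (n:ℝ) * (D/n) = D by field_simp]
    simpa using hγ.2.1
  rw [hend] at hfin
  calc quasiHypWrt (eCD b ε) x y ≤ (n:ℝ) * ((ε * Real.exp (2*ε)) * (D/n)) := hfin
    _ = (ε * Real.exp (2*ε)) * D := by field_simp

end S16E1
section S16E2

variable {X : Type*} [MetricSpace X] {b : X → ℝ} {ε K δ : ℝ}

lemma one_sub_exp_pos {w : ℝ} (hw : 0 < w) : 0 < 1 - Real.exp (-w) := by
  have h := Real.exp_lt_exp.2 (show -w < 0 by linarith)
  rw [Real.exp_zero] at h
  linarith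

lemma sigma_contOn (hlip : ∀ p q : X, |b p - b q| ≤ dist p q) (hε : 0 < ε)
    (hGeo : GeodesicSpaceWrt (distFun X)) {T : ℝ} {σ : ℝ → X}
    (hadm : ∀ s ∈ Icc (0:ℝ) T, ∀ t ∈ Icc (0:ℝ) T, eCD b ε (σ s) (σ t) ≤ |s - t|) :
    ContinuousOn σ (Icc 0 T) := by
  intro t ht
  rw [Metric.continuousWithinAt_iff]
  intro θ hθ
  have hpos : 0 < uniformizationDensity b ε (σ t) * (1 - Real.exp (-(ε*(θ/2))))/ε :=
    div_pos (mul_pos (uD_pos b ε _) (one_sub_exp_pos (by positivity))) hε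
  refine ⟨_, hpos, fun s hs hst => ?_⟩
  have h1 : eCD b ε (σ t) (σ s) ≤ |t - s| := hadm t ht s hs
  have h2 : |t - s| = dist s t := by rw [Real.dist_eq, abs_sub_comm]
  have h3 : eCD b ε (σ t) (σ s) ≤
      (uniformizationDensity b ε (σ t)/ε) * (1 - Real.exp (-(ε*(θ/2)))) := by
    rw [h2] at h1
    calc eCD b ε (σ t) (σ s) ≤ dist s t := h1
      _ ≤ uniformizationDensity b ε (σ t) * (1 - Real.exp (-(ε*(θ/2))))/ε := hst.le
      _ = (uniformizationDensity b ε (σ t)/ε) * (1 - Real.exp (-(ε*(θ/2)))) := by ring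
  have h4 := dist_le_of_eC_le hlip hε hGeo (r := θ/2) (by linarith) h3
  rw [dist_comm]
  linarith

/-- Lower bound for the quasihyperbolic distance. -/
lemma k_ge [ProperSpace X] (hδ : 0 ≤ δ) (hε : 0 < ε) (hK : 0 ≤ K)
    (hGeo : GeodesicSpaceWrt (distFun X)) (hHyp : DeltaHyperbolicWrt (distFun X) δ)
    (hb : BhatStarlike (distFun X) K b) (x y : X) :
    (2 * Real.exp 1 * Cone K ε δ)⁻¹ * dist x y ≤ quasiHypWrt (eCD b ε) x y := by
  have hlip := bhat_lip hb
  have hC₁pos : 0 < Cone K ε δ := Cone_pos hK hε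
  set C₁ : ℝ := Cone K ε δ with hC₁
  set c₀ : ℝ := (2 * Real.exp 1 * C₁)⁻¹ with hc₀
  have hc₀pos : 0 < c₀ := inv_pos.2 (by positivity)
  rw [quasiHyp_eq]
  apply le_confDist (kset_nonempty hlip hε hGeo x y)
  rintro l ⟨T, σ, hT, hadm, h0, h1, rfl⟩
  show c₀ * dist x y ≤ ∫ t in (0:ℝ)..T, (bdryDistWrt (eCD b ε) (σ t))⁻¹
  by_cases hT0 : T = 0
  · subst hT0
    rw [intervalIntegral.integral_same, show x = y from by rw [← h0, ← h1], dist_self,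
      mul_zero]
  have hσc : ContinuousOn σ (Icc 0 T) := sigma_contOn hlip hε hGeo hadm
  have hρc : ContinuousOn (fun t => uniformizationDensity b ε (σ t)) (Icc 0 T) :=
    (uD_continuous hlip).comp_continuousOn hσc
  obtain ⟨tm, htm, hmin'⟩ := (isCompact_Icc (a := (0:ℝ)) (b := T)).exists_isMinOn
    ⟨0, left_mem_Icc.2 hT⟩ hρc
  have hmin : ∀ r ∈ Icc (0:ℝ) T, uniformizationDensity b ε (σ tm) ≤
      uniformizationDensity b ε (σ r) := fun r hr => hmin' hr
  set m : ℝ := uniformizationDensity b ε (σ tm) with hm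
  have hmpos : 0 < m := uD_pos b ε _
  have hmle : ∀ r ∈ Icc (0:ℝ) T, m ≤ uniformizationDensity b ε (σ r) := hmin
  set B : ℝ := min 1 ε⁻¹ with hB
  have hBpos : 0 < B := lt_min one_pos (inv_pos.2 hε)
  have hεB : ε * B ≤ 1 := by
    calc ε * B ≤ ε * ε⁻¹ := mul_le_mul_of_nonneg_left (min_le_right _ _) hε.le
      _ = 1 := mul_inv_cancel₀ hε.ne'
  set η : ℝ := (m/2) * B with hη
  have hηpos : 0 < η := mul_pos (by linarith) hBpos
  have piece : ∀ s t : ℝ, s ∈ Icc (0:ℝ) T → t ∈ Icc (0:ℝ) T → s ≤ t → t - s ≤ η →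
      c₀ * dist (σ s) (σ t) ≤ ∫ r in s..t, (bdryDistWrt (eCD b ε) (σ r))⁻¹ := by
    intro s t hs ht hst hts
    have huspos := uD_pos b ε (σ s)
    have hds : ∀ r, r ∈ Icc s t → dist (σ s) (σ r) ≤
        2*(r - s)/uniformizationDensity b ε (σ s) := by
      intro r hr
      have hrI : r ∈ Icc (0:ℝ) T := ⟨le_trans hs.1 hr.1, le_trans hr.2 ht.2⟩
      have hE : eCD b ε (σ s) (σ r) ≤ r - s := by
        have := hadm s hs r hrI
        rwa [abs_of_nonpos (by linarith [hr.1]), neg_sub] at this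
      set v : ℝ := ε*(r - s)/uniformizationDensity b ε (σ s) with hv
      have hv0 : 0 ≤ v :=
        div_nonneg (mul_nonneg hε.le (by linarith [hr.1])) huspos.le
      have hv2 : v ≤ 1/2 := by
        have hms : m ≤ uniformizationDensity b ε (σ s) := hmle s hs
        have h1 : ε*(r-s) ≤ ε*η :=
          mul_le_mul_of_nonneg_left (by linarith [hr.2]) hε.le
        have h2 : v ≤ ε*η/m := by
          rw [hv]
          exact div_le_div₀ (mul_nonneg hε.le hηpos.le) h1 hmpos hms
        have h3 : ε*η/m = (ε/2)*B := by rw [hη]; field_simp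
        have h4 : (ε/2)*B ≤ 1/2 := by nlinarith [hεB]
        linarith
      apply dist_le_of_eC_le hlip hε hGeo
        (r := 2*(r-s)/uniformizationDensity b ε (σ s))
        (div_nonneg (by nlinarith [hr.1] : (0:ℝ) ≤ 2*(r-s)) huspos.le) ?_
      have harg : ε * (2*(r-s)/uniformizationDensity b ε (σ s)) = 2*v := by
        rw [hv]; field_simp
      rw [harg]
      have haux := aux_exp_half hv0 hv2
      have h5 : (uniformizationDensity b ε (σ s)/ε)*v = r - s := by
        rw [hv]; field_simp
      have h6 : (uniformizationDensity b ε (σ s)/ε)*v ≤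
          (uniformizationDensity b ε (σ s)/ε)*(1 - Real.exp (-(2*v))) :=
        mul_le_mul_of_nonneg_left (by linarith) (by positivity)
      linarith
    have hdB : ∀ r, r ∈ Icc s t → dist (σ s) (σ r) ≤ B := by
      intro r hr
      have h1 := hds r hr
      have hms : m ≤ uniformizationDensity b ε (σ s) := hmle s hs
      have h2 : 2*(r-s)/uniformizationDensity b ε (σ s) ≤ 2*η/m := by
        apply div_le_div₀ (by nlinarith [hηpos.le] : (0:ℝ) ≤ 2*η) _ hmpos hms
        nlinarith [hr.2]
      have h3 : 2*η/m = B := by rw [hη]; field_simp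
      linarith
    have hlow : ∀ r ∈ Icc s t,
        (C₁ * (uniformizationDensity b ε (σ s) * Real.exp 1))⁻¹ ≤
        (bdryDistWrt (eCD b ε) (σ r))⁻¹ := by
      intro r hr
      have h1 := bdry_le hδ hε hGeo hHyp hb (σ r)
      have h2 : uniformizationDensity b ε (σ r) ≤
          uniformizationDensity b ε (σ s) * Real.exp 1 := by
        calc uniformizationDensity b ε (σ r) ≤
            uniformizationDensity b ε (σ s) * Real.exp (ε * B) :=
              uD_le_of_dist hlip hε _ _ (hdB r hr)
          _ ≤ uniformizationDensity b ε (σ s) * Real.exp 1 :=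
              mul_le_mul_of_nonneg_left (Real.exp_le_exp.2 hεB) (uD_nonneg b ε _)
      have h3 : bdryDistWrt (eCD b ε) (σ r) ≤
          C₁ * (uniformizationDensity b ε (σ s) * Real.exp 1) := by
        rw [hC₁]
        exact le_trans h1 (mul_le_mul_of_nonneg_left h2 hC₁pos.le)
      exact inv_anti₀ (bdry_pos hδ hε hGeo hHyp hb (σ r)) h3
    have hcont := kadm_integrand_contOn hδ hε hGeo hHyp hb hadm
    have hint : IntervalIntegrable (fun r => (bdryDistWrt (eCD b ε) (σ r))⁻¹)
        MeasureTheory.volume s t := by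
      apply ContinuousOn.intervalIntegrable
      apply hcont.mono
      rw [uIcc_of_le hst]
      exact Icc_subset_Icc hs.1 ht.2
    have hI : (t - s) * (C₁ * (uniformizationDensity b ε (σ s) * Real.exp 1))⁻¹ ≤
        ∫ r in s..t, (bdryDistWrt (eCD b ε) (σ r))⁻¹ := by
      have h := intervalIntegral.integral_mono_on hst intervalIntegrable_const hint hlow
      rwa [intervalIntegral.integral_const, smul_eq_mul] at h
    have heq : c₀ * (2*(t-s)/uniformizationDensity b ε (σ s)) =
        (t - s) * (C₁ * (uniformizationDensity b ε (σ s) * Real.exp 1))⁻¹ := by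
      rw [hc₀]
      field_simp
    have hfinal : c₀ * dist (σ s) (σ t) ≤
        (t - s) * (C₁ * (uniformizationDensity b ε (σ s) * Real.exp 1))⁻¹ := by
      calc c₀ * dist (σ s) (σ t) ≤ c₀ * (2*(t-s)/uniformizationDensity b ε (σ s)) :=
            mul_le_mul_of_nonneg_left (hds t ⟨hst, le_rfl⟩) hc₀pos.le
        _ = _ := heq
    linarith
  set n : ℕ := ⌊T/η⌋₊ + 1 with hn
  have hnpos : 0 < (n:ℝ) := by positivity
  have hTn : T/(n:ℝ) ≤ η := by
    have h1 : T/η < n := by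
      rw [hn]; push_cast; exact Nat.lt_floor_add_one _
    rw [div_lt_iff₀ hηpos] at h1
    rw [div_le_iff₀ hnpos]
    nlinarith
  set a : ℕ → ℝ := fun i => i * (T/n) with ha
  have hTn0 : 0 ≤ T/(n:ℝ) := div_nonneg hT hnpos.le
  have hmema : ∀ i : ℕ, i ≤ n → a i ∈ Icc (0:ℝ) T := by
    intro i hi
    constructor
    · rw [ha]; positivity
    · rw [ha]
      calc (i:ℝ)*(T/n) ≤ (n:ℝ)*(T/n) :=
          mul_le_mul_of_nonneg_right (by exact_mod_cast hi) hTn0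
        _ = T := by field_simp
  have hstep : ∀ i : ℕ, a (i+1) - a i = T/n := by
    intro i; rw [ha]; push_cast; ring
  have hcont := kadm_integrand_contOn hδ hε hGeo hHyp hb hadm
  have hintp : ∀ k : ℕ, k < n → IntervalIntegrable
      (fun r => (bdryDistWrt (eCD b ε) (σ r))⁻¹) MeasureTheory.volume (a k) (a (k+1)) := by
    intro k hk
    apply ContinuousOn.intervalIntegrable
    apply hcont.mono
    rw [uIcc_of_le (by linarith [hstep k, hTn0] : a k ≤ a (k+1))]
    exact Icc_subset_Icc (hmema k (by omega)).1 (hmema (k+1) (by omega)).2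
  have hsum := intervalIntegral.sum_integral_adjacent_intervals hintp
  have ha0 : a 0 = 0 := by rw [ha]; simp
  have han : a n = T := by rw [ha]; field_simp
  have htele := dist_le_range_sum_dist (fun i => σ (a i)) n
  have hsum_ge : ∀ i ∈ Finset.range n,
      c₀ * dist (σ (a i)) (σ (a (i+1))) ≤
        ∫ r in a i..a (i+1), (bdryDistWrt (eCD b ε) (σ r))⁻¹ := by
    intro i hi
    have hi' := Finset.mem_range.1 hi
    exact piece (a i) (a (i+1)) (hmema i (by omega)) (hmema (i+1) (by omega))
      (by linarith [hstep i, hTn0]) (by rw [hstep i]; exact hTn)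
  calc c₀ * dist x y = c₀ * dist (σ (a 0)) (σ (a n)) := by rw [ha0, han, h0, h1]
    _ ≤ c₀ * ∑ i ∈ Finset.range n, dist (σ (a i)) (σ (a (i+1))) := by
        apply mul_le_mul_of_nonneg_left _ hc₀pos.le
        simpa using htele
    _ = ∑ i ∈ Finset.range n, c₀ * dist (σ (a i)) (σ (a (i+1))) := by
        rw [Finset.mul_sum]
    _ ≤ ∑ i ∈ Finset.range n, ∫ r in a i..a (i+1), (bdryDistWrt (eCD b ε) (σ r))⁻¹ :=
        Finset.sum_le_sum hsum_ge
    _ = ∫ r in (a 0)..(a n), (bdryDistWrt (eCD b ε) (σ r))⁻¹ := hsum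
    _ = ∫ r in (0:ℝ)..T, (bdryDistWrt (eCD b ε) (σ r))⁻¹ := by rw [ha0, han]

end S16E2

/-- If `X` is a proper geodesic `δ`-hyperbolic space, `b ∈ 𝔅̂(X)` with
`X` `K`-roughly starlike from its basepoint, and `ρ_{ε,b}` is a GH-density with constant
`M`, then the identity map from `X` to the quasihyperbolization `Y` of `X_{ε,b}` is
`H`-biLipschitz with `H` depending only on `δ`, `K`, `ε`, `M`. -/
theorem statement16 (δ K ε M : ℝ) (hδ : 0 ≤ δ) (hK : 0 ≤ K) (hε : 0 < ε) (hM : 1 ≤ M) :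
    ∃ H : ℝ, 1 ≤ H ∧
      ∀ (X : Type*) [MetricSpace X] [ProperSpace X],
        GeodesicSpaceWrt (distFun X) → DeltaHyperbolicWrt (distFun X) δ →
        ∀ b : X → ℝ, BhatStarlike (distFun X) K b →
          IsGHDensityWrt (distFun X) M (uniformizationDensity b ε) →
          ∀ x y : X,
            H⁻¹ * dist x y ≤
              quasiHypWrt (confDistWrt (distFun X) (uniformizationDensity b ε)) x y ∧
            quasiHypWrt (confDistWrt (distFun X) (uniformizationDensity b ε)) x y ≤
              H * dist x y := by
  refine ⟨max 1 (max (ε * Real.exp (2*ε)) (2 * Real.exp 1 * Cone K ε δ)),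
    le_max_left _ _, ?_⟩
  intro X _ _ hGeo hHyp b hb _hGH x y
  have hC₁pos : 0 < Cone K ε δ := Cone_pos hK hε
  have h2e : 0 < 2 * Real.exp 1 * Cone K ε δ :=
    mul_pos (by positivity) hC₁pos
  constructor
  · have hk := k_ge hδ hε hK hGeo hHyp hb x y
    have hinv : (max 1 (max (ε * Real.exp (2*ε)) (2 * Real.exp 1 * Cone K ε δ)))⁻¹ ≤
        (2 * Real.exp 1 * Cone K ε δ)⁻¹ :=
      inv_anti₀ h2e (le_trans (le_max_right _ _) (le_max_right _ _))
    calc (max 1 (max (ε * Real.exp (2*ε)) (2 * Real.exp 1 * Cone K ε δ)))⁻¹ * dist x y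
        ≤ (2 * Real.exp 1 * Cone K ε δ)⁻¹ * dist x y :=
          mul_le_mul_of_nonneg_right hinv dist_nonneg
      _ ≤ quasiHypWrt (confDistWrt (distFun X) (uniformizationDensity b ε)) x y := hk
  · have hk := k_le hδ hε hGeo hHyp hb x y
    calc quasiHypWrt (confDistWrt (distFun X) (uniformizationDensity b ε)) x y
        ≤ (ε * Real.exp (2*ε)) * dist x y := hk
      _ ≤ (max 1 (max (ε * Real.exp (2*ε)) (2 * Real.exp 1 * Cone K ε δ))) * dist x y :=
          mul_le_mul_of_nonneg_right
            (le_trans (le_max_left _ _) (le_max_right _ _)) dist_nonneg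

end Paper

end
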